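/- arXiv:1803.00673 — 5 statements merged into one kernel-verified Lean document; each statement's English description precedes it below -/
import Mathlib

section
/- Let d_1 ≥ d_2 ≥ ... ≥ d_n be a zero-free graphical degree sequence (n ≥ 2). If d_1 ≥ n − 2, then the sequence is forcibly connected, i.e., every simple graph realizing it is connected. -/
open SimpleGraph Multiset Finset

/-- The multiset of vertex degrees of a simple graph on a finite vertex type. -/
noncomputable def degreeMultiset {V : Type*} [Fintype V] (G : SimpleGraph V) : Multiset ℕ :=
  Finset.univ.val.map fun v => (G.neighborSet v).ncard

/-- A multiset of naturals is graphical if it is the degree multiset of some simple graph. -/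
def IsGraphicalM (m : Multiset ℕ) : Prop :=
  ∃ G : SimpleGraph (Fin (Multiset.card m)), degreeMultiset G = m

/-- A multiset is potentially connected if some realization is connected. -/
def PotentiallyConnectedM (m : Multiset ℕ) : Prop :=
  ∃ G : SimpleGraph (Fin (Multiset.card m)), degreeMultiset G = m ∧ G.Connected

/-- A multiset is forcibly connected if every realization is connected. -/
def ForciblyConnectedM (m : Multiset ℕ) : Prop :=
  ∀ G : SimpleGraph (Fin (Multiset.card m)), degreeMultiset G = m → G.Connected

/-- The multiset of terms of a finite sequence. -/
def seqM {n : ℕ} (d : Fin n → ℕ) : Multiset ℕ :=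
  Finset.univ.val.map d

/-- A sequence is graphical if some simple graph on `Fin n` realizes it. -/
def IsGraphicalSeq {n : ℕ} (d : Fin n → ℕ) : Prop :=
  ∃ G : SimpleGraph (Fin n), degreeMultiset G = seqM d

/-- A sequence is potentially connected if some realization is connected. -/
def PotentiallyConnectedSeq {n : ℕ} (d : Fin n → ℕ) : Prop :=
  ∃ G : SimpleGraph (Fin n), degreeMultiset G = seqM d ∧ G.Connected

/-- A sequence is forcibly connected if every realization is connected. -/
def ForciblyConnectedSeq {n : ℕ} (d : Fin n → ℕ) : Prop :=
  ∀ G : SimpleGraph (Fin n), degreeMultiset G = seqM d → G.Connected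

theorem stmt0 {n : ℕ} (hn : 2 ≤ n) (d : Fin n → ℕ) (hanti : Antitone d)
    (hpos : ∀ i, 0 < d i) (hg : IsGraphicalSeq d)
    (h : n - 2 ≤ d ⟨0, by omega⟩) :
    ForciblyConnectedSeq d := by
  classical
  intro G hG
  have hdeg : ∀ u : Fin n, (G.neighborSet u).ncard = G.degree u := by
    intro u
    rw [SimpleGraph.degree, SimpleGraph.neighborFinset_def, Set.ncard_eq_toFinset_card']
  -- find a vertex of degree d 0
  have h0 : d ⟨0, by omega⟩ ∈ degreeMultiset G := by
    rw [hG]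
    exact Multiset.mem_map_of_mem _ (Finset.mem_val.mpr (Finset.mem_univ _))
  obtain ⟨v, -, hv⟩ := Multiset.mem_map.mp h0
  rw [hdeg v] at hv
  have hvbig : n - 2 ≤ G.degree v := hv ▸ h
  -- every vertex has positive degree
  have hposdeg : ∀ u : Fin n, 0 < G.degree u := by
    intro u
    have hu : (G.neighborSet u).ncard ∈ seqM d := by
      rw [← hG]
      exact Multiset.mem_map_of_mem _ (Finset.mem_val.mpr (Finset.mem_univ u))
    obtain ⟨i, -, hi⟩ := Multiset.mem_map.mp hu
    rw [← hdeg u, ← hi]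
    exact hpos i
  -- at most one vertex outside {v} ∪ N(v)
  have key : ∀ a b : Fin n, a ≠ v → ¬ G.Adj v a → b ≠ v → ¬ G.Adj v b → a = b := by
    intro a b ha hva hb hvb
    by_contra hab
    have hsub : insert v (G.neighborFinset v) ⊆ Finset.univ \ {a, b} := by
      intro x hx
      rcases Finset.mem_insert.mp hx with rfl | hx
      · simp [Finset.mem_sdiff]
        constructor
        · rintro rfl; exact ha rfl
        · rintro rfl; exact hb rfl
      · simp [Finset.mem_sdiff]
        constructor
        · rintro rfl; exact hva ((SimpleGraph.mem_neighborFinset _ _ _).mp hx)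
        · rintro rfl; exact hvb ((SimpleGraph.mem_neighborFinset _ _ _).mp hx)
    have hc1 : (insert v (G.neighborFinset v)).card = G.degree v + 1 :=
      Finset.card_insert_of_notMem (G.notMem_neighborFinset_self v)
    have hc2 : (Finset.univ \ ({a, b} : Finset (Fin n))).card = n - 2 := by
      rw [Finset.card_sdiff_of_subset (by simp)]
      simp [Finset.card_pair hab]
    have := Finset.card_le_card hsub
    rw [hc1, hc2] at this
    omega
  -- every vertex is reachable from v
  have reach : ∀ a : Fin n, G.Reachable v a := by
    intro a
    by_cases hav : a = v
    · rw [hav]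
    by_cases hadj : G.Adj v a
    · exact hadj.reachable
    -- a is the unique outside vertex; it has a neighbor w
    have : (G.neighborFinset a).Nonempty := Finset.card_pos.mp (hposdeg a)
    obtain ⟨w, hw⟩ := this
    have haw : G.Adj a w := (SimpleGraph.mem_neighborFinset _ _ _).mp hw
    by_cases hwv : w = v
    · exact (hwv ▸ haw).symm.reachable
    by_cases hwadj : G.Adj v w
    · exact hwadj.reachable.trans haw.symm.reachable
    · exact absurd (key a w hav hadj hwv hwadj) (G.ne_of_adj haw)
  rw [SimpleGraph.connected_iff]
  exact ⟨fun a b => (reach a).symm.trans (reach b), ⟨v⟩⟩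
end

section
/- Let d_1 = d_2 = ... = d_n = d be a constant zero-free graphical degree sequence with d < ⌊n/2⌋ and d ≤ n − 3. Then the sequence is not forcibly connected, i.e., it has a disconnected realization. -/
open SimpleGraph Multiset Finset

-- neighbor sets in a disjoint sum
lemma neighborSet_sum_inl {α β : Type*} (G : SimpleGraph α) (H : SimpleGraph β) (v : α) :
    (G ⊕g H).neighborSet (Sum.inl v) = Sum.inl '' G.neighborSet v := by
  ext u
  cases u with
  | inl u => simp [SimpleGraph.sum]
  | inr u => simp [SimpleGraph.sum]

lemma neighborSet_sum_inr {α β : Type*} (G : SimpleGraph α) (H : SimpleGraph β) (v : β) :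
    (G ⊕g H).neighborSet (Sum.inr v) = Sum.inr '' H.neighborSet v := by
  ext u
  cases u with
  | inl u => simp [SimpleGraph.sum]
  | inr u => simp [SimpleGraph.sum]

-- neighbor sets under map by an equiv
lemma neighborSet_map_equiv {V W : Type*} (e : V ≃ W) (G : SimpleGraph V) (v : V) :
    (G.map e.toEmbedding).neighborSet (e v) = e '' G.neighborSet v := by
  ext u
  simp only [mem_neighborSet, SimpleGraph.map_adj, Equiv.coe_toEmbedding, Set.mem_image]
  constructor
  · rintro ⟨-, a, b, hab, ha, rfl⟩
    exact ⟨b, by rwa [e.injective ha] at hab, rfl⟩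
  · rintro ⟨b, hb, rfl⟩
    exact ⟨e.injective.ne hb.ne, v, b, hb, rfl, rfl⟩

-- circulant neighbor set
lemma neighborSet_circ {m : ℕ} (S : Finset (ZMod m)) (hsym : ∀ x ∈ S, -x ∈ S)
    (h0 : (0 : ZMod m) ∉ S) (v : ZMod m) :
    (circulantGraph (S : Set (ZMod m))).neighborSet v = (fun s => v + s) '' S := by
  ext u
  simp only [mem_neighborSet, circulantGraph_adj, Finset.coe_sort_coe, Set.mem_image,
    Finset.mem_coe]
  constructor
  · rintro ⟨hne, h⟩
    have hmem : u - v ∈ S := by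
      rcases h with h | h
      · have := hsym _ h; rwa [neg_sub] at this
      · exact h
    exact ⟨u - v, hmem, by ring⟩
  · rintro ⟨s, hs, rfl⟩
    refine ⟨fun h => h0 ?_, Or.inr ?_⟩
    · have : s = 0 := by
        have := congrArg (fun x => x - v) h
        simpa using this.symm
      rwa [this] at hs
    · simpa using hs

lemma exists_jump_set (m d : ℕ) (hm : d + 1 ≤ m) (hpar : d % 2 = 1 → m % 2 = 0) :
    ∃ S : Finset (ZMod m), S.card = d ∧ (∀ x ∈ S, -x ∈ S) ∧ (0 : ZMod m) ∉ S := by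
  have hm0 : 0 < m := by omega
  haveI : NeZero m := ⟨by omega⟩
  set k := d / 2 with hk
  have hdk : d = 2 * k + d % 2 := by omega
  have hmk : 2 * k + 1 ≤ m := by omega
  set T : Finset ℕ :=
    (Finset.Icc 1 k ∪ Finset.Icc (m - k) (m - 1)) ∪ (if d % 2 = 1 then {m / 2} else ∅) with hT
  have hmemT : ∀ v ∈ T, 1 ≤ v ∧ v < m := by
    intro v hv
    rw [hT] at hv
    simp only [Finset.mem_union, Finset.mem_Icc] at hv
    rcases hv with (h | h) | h
    · omega
    · omega
    · by_cases hpd : d % 2 = 1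
      · rw [if_pos hpd, Finset.mem_singleton] at h
        have := hpar hpd
        omega
      · rw [if_neg hpd] at h; exact absurd h (Finset.notMem_empty _)
  have hnegT : ∀ v ∈ T, m - v ∈ T := by
    intro v hv
    rw [hT] at hv ⊢
    simp only [Finset.mem_union, Finset.mem_Icc] at hv ⊢
    rcases hv with (h | h) | h
    · exact Or.inl (Or.inr ⟨by omega, by omega⟩)
    · exact Or.inl (Or.inl ⟨by omega, by omega⟩)
    · by_cases hpd : d % 2 = 1
      · rw [if_pos hpd, Finset.mem_singleton] at h
        have hme := hpar hpd
        refine Or.inr ?_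
        rw [if_pos hpd, Finset.mem_singleton]
        omega
      · rw [if_neg hpd] at h; exact absurd h (Finset.notMem_empty _)
  have hcardT : T.card = d := by
    have hd1 : Disjoint (Finset.Icc 1 k) (Finset.Icc (m - k) (m - 1)) := by
      rw [Finset.disjoint_left]
      intro v hv hv'
      simp only [Finset.mem_Icc] at hv hv'
      omega
    have hc1 : (Finset.Icc 1 k ∪ Finset.Icc (m - k) (m - 1)).card = 2 * k := by
      rw [Finset.card_union_of_disjoint hd1, Nat.card_Icc, Nat.card_Icc]
      omega
    by_cases hpd : d % 2 = 1
    · have hme := hpar hpd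
      have hd2 : Disjoint (Finset.Icc 1 k ∪ Finset.Icc (m - k) (m - 1))
          (if d % 2 = 1 then ({m / 2} : Finset ℕ) else ∅) := by
        rw [if_pos hpd, Finset.disjoint_left]
        intro v hv hv'
        simp only [Finset.mem_union, Finset.mem_Icc] at hv
        simp only [Finset.mem_singleton] at hv'
        omega
      rw [hT, Finset.card_union_of_disjoint hd2, hc1, if_pos hpd, Finset.card_singleton]
      omega
    · rw [hT, if_neg hpd, Finset.union_empty, hc1]
      omega
  refine ⟨T.image (Nat.cast : ℕ → ZMod m), ?_, ?_, ?_⟩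
  · rw [Finset.card_image_of_injOn, hcardT]
    intro a ha b hb hab
    have ha' := hmemT a ha
    have hb' := hmemT b hb
    have := congrArg ZMod.val hab
    rwa [ZMod.val_cast_of_lt ha'.2, ZMod.val_cast_of_lt hb'.2] at this
  · intro x hx
    rw [Finset.mem_image] at hx ⊢
    obtain ⟨v, hv, rfl⟩ := hx
    refine ⟨m - v, hnegT v hv, ?_⟩
    have h1 := hmemT v hv
    have : ((m - v : ℕ) : ZMod m) + (v : ZMod m) = 0 := by
      rw [← Nat.cast_add]
      have : m - v + v = m := by omega
      rw [this, ZMod.natCast_self]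
    linear_combination this
  · intro hx
    rw [Finset.mem_image] at hx
    obtain ⟨v, hv, hv0⟩ := hx
    have h1 := hmemT v hv
    have := congrArg ZMod.val hv0
    rw [ZMod.val_cast_of_lt h1.2, ZMod.val_zero] at this
    omega

lemma sum_walk_isLeft {α β : Type*} {G : SimpleGraph α} {H : SimpleGraph β} {u v : α ⊕ β}
    (w : (G ⊕g H).Walk u v) : u.isLeft = v.isLeft := by
  induction w with
  | nil => rfl
  | @cons a b c h _ ih =>
    have hab : a.isLeft = b.isLeft := by
      cases a <;> cases b <;> simp [SimpleGraph.sum] at h ⊢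
    rw [hab, ih]

lemma sum_not_connected {α β : Type*} [Nonempty α] [Nonempty β]
    (G : SimpleGraph α) (H : SimpleGraph β) : ¬ (G ⊕g H).Connected := by
  intro hc
  obtain ⟨a⟩ := (inferInstance : Nonempty α)
  obtain ⟨b⟩ := (inferInstance : Nonempty β)
  obtain ⟨w⟩ := hc.preconnected (Sum.inl a) (Sum.inr b)
  simpa using sum_walk_isLeft w

theorem stmt3 (n dv : ℕ) (hd : 0 < dv) (h1 : dv < n / 2) (h2 : dv ≤ n - 3)
    (hg : IsGraphicalSeq (fun _ : Fin n => dv)) :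
    ¬ ForciblyConnectedSeq (fun _ : Fin n => dv) := by
  classical
  have hn : 2 * dv + 2 ≤ n := by omega
  -- parity: n * dv is even
  have heven : Even (n * dv) := by
    obtain ⟨G, hG⟩ := hg
    have hsum : (degreeMultiset G).sum = (seqM (fun _ : Fin n => dv)).sum := by rw [hG]
    have hl : (degreeMultiset G).sum = ∑ v : Fin n, (G.neighborSet v).ncard := rfl
    have hr : (seqM (fun _ : Fin n => dv)).sum = ∑ _v : Fin n, dv := rfl
    have key : (∑ v : Fin n, (G.neighborSet v).ncard) = ∑ _v : Fin n, dv :=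
      hl.symm.trans (hsum.trans hr)
    have hdeg : ∀ v : Fin n, (G.neighborSet v).ncard = G.degree v := by
      intro v
      rw [Set.ncard_eq_toFinset_card']
      rfl
    have hsum2 : ∑ v : Fin n, G.degree v = n * dv := by
      calc ∑ v : Fin n, G.degree v = ∑ v : Fin n, (G.neighborSet v).ncard :=
            Finset.sum_congr rfl fun v _ => (hdeg v).symm
        _ = ∑ _v : Fin n, dv := key
        _ = n * dv := by simp [mul_comm]
    rw [← hsum2, G.sum_degrees_eq_twice_card_edges]
    exact even_two_mul _
  set m := n - (dv + 1) with hmdef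
  have hm : dv + 1 ≤ m := by omega
  haveI : NeZero m := ⟨by omega⟩
  have hpar : dv % 2 = 1 → m % 2 = 0 := by
    intro hodd
    rcases Nat.even_mul.mp heven with he | he <;> rw [Nat.even_iff] at he <;> omega
  obtain ⟨S, hScard, hSsym, hS0⟩ := exists_jump_set m dv hm hpar
  set G0 : SimpleGraph (Fin (dv + 1) ⊕ ZMod m) :=
    (⊤ : SimpleGraph (Fin (dv + 1))) ⊕g circulantGraph (S : Set (ZMod m)) with hG0
  have hcard : Fintype.card (Fin (dv + 1) ⊕ ZMod m) = n := by
    rw [Fintype.card_sum, Fintype.card_fin, ZMod.card]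
    omega
  set e := Fintype.equivFinOfCardEq hcard with he
  set G' := G0.map e.toEmbedding with hG'
  have hdeg : ∀ w : Fin n, (G'.neighborSet w).ncard = dv := by
    intro w
    obtain ⟨v, rfl⟩ := e.surjective w
    rw [hG', _root_.neighborSet_map_equiv, Set.ncard_image_of_injective _ e.injective]
    cases v with
    | inl a =>
      have htop : (⊤ : SimpleGraph (Fin (dv + 1))).neighborSet a = {a}ᶜ := by
        ext u
        simp [ne_comm]
      rw [hG0, _root_.neighborSet_sum_inl, Set.ncard_image_of_injective _ Sum.inl_injective, htop]
      have h := Set.ncard_add_ncard_compl ({a} : Set (Fin (dv + 1)))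
      rw [Set.ncard_singleton, Nat.card_eq_fintype_card, Fintype.card_fin] at h
      omega
    | inr b =>
      rw [hG0, _root_.neighborSet_sum_inr, Set.ncard_image_of_injective _ Sum.inr_injective,
        neighborSet_circ S hSsym hS0,
        Set.ncard_image_of_injective _ (add_right_injective b), Set.ncard_coe_finset, hScard]
  intro hfc
  have hdm : degreeMultiset G' = seqM (fun _ : Fin n => dv) := by
    unfold degreeMultiset seqM
    exact Multiset.map_congr rfl fun v _ => hdeg v
  have hconn := hfc G' hdm
  have hiso : G0 ≃g G' := ⟨e, map_adj_apply⟩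
  haveI : Nonempty (ZMod m) := ⟨0⟩
  exact sum_not_connected _ _ (hiso.connected_iff.mpr hconn)
end

section
/- A zero-free graphical degree sequence d_1 ≥ d_2 ≥ ... ≥ d_n is potentially connected (has at least one connected realization) if and only if d_1 + d_2 + ... + d_n ≥ 2n − 2. -/
open SimpleGraph Multiset Finset

set_option maxHeartbeats 1000000
set_option linter.unusedSectionVars false
set_option linter.unusedVariables false
open scoped Classical

section Aux
variable {V : Type*} [Fintype V] [DecidableEq V]


/-- lift reachability through adjacency-to-reachability map -/
lemma reach_lift {G H : SimpleGraph V} (h : ∀ ⦃u v : V⦄, G.Adj u v → H.Reachable u v)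
    {u v : V} (hr : G.Reachable u v) : H.Reachable u v := by
  obtain ⟨w⟩ := hr
  induction w with
  | nil => exact Reachable.refl _
  | cons ha _ ih => exact (h ha).trans ih

/-- reachability in H ⊔ edge x y -/
lemma reach_sup_edge {H : SimpleGraph V} {x y u v : V}
    (hr : (H ⊔ edge x y).Reachable u v) :
    H.Reachable u v ∨ (H.Reachable u x ∧ H.Reachable y v) ∨
      (H.Reachable u y ∧ H.Reachable x v) := by
  obtain ⟨w⟩ := hr
  induction w with
  | nil => exact Or.inl (Reachable.refl _)
  | @cons u w v ha _ ih =>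
    rcases ha with ha | ha
    · rcases ih with h1 | ⟨h1, h2⟩ | ⟨h1, h2⟩
      · exact Or.inl ((Adj.reachable ha).trans h1)
      · exact Or.inr (Or.inl ⟨(Adj.reachable ha).trans h1, h2⟩)
      · exact Or.inr (Or.inr ⟨(Adj.reachable ha).trans h1, h2⟩)
    · rw [edge_adj] at ha
      obtain ⟨⟨rfl, rfl⟩ | ⟨rfl, rfl⟩, hne⟩ := ha
      · rcases ih with h1 | ⟨h1, h2⟩ | ⟨h1, h2⟩
        · exact Or.inr (Or.inl ⟨Reachable.refl _, h1⟩)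
        · exact Or.inl (h1.symm.trans h2)
        · exact Or.inl h2
      · rcases ih with h1 | ⟨h1, h2⟩ | ⟨h1, h2⟩
        · exact Or.inr (Or.inr ⟨Reachable.refl _, h1⟩)
        · exact Or.inl h2
        · exact Or.inl (h1.symm.trans h2)

lemma sup_edge_acyclic {G : SimpleGraph V} {u v : V} (h : G.IsAcyclic)
    (hr : ¬G.Reachable u v) : (G ⊔ edge u v).IsAcyclic := by
  have hne : u ≠ v := fun e => hr (e ▸ Reachable.refl u)
  rw [isAcyclic_iff_forall_adj_isBridge]
  intro a b hadj
  refine fun (hreach : ((G ⊔ edge u v) \ fromEdgeSet {s(a, b)}).Reachable a b) => ?_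
  by_cases hf : s(a, b) = s(u, v)
  · have hle : (G ⊔ edge u v) \ fromEdgeSet {s(a, b)} ≤ G := by
      intro x y hxy
      simp only [sdiff_adj, sup_adj, edge_adj, fromEdgeSet_adj, Set.mem_singleton_iff] at hxy
      rcases hxy with ⟨hl | hl, hr2⟩
      · exact hl
      · exfalso
        refine hr2 ⟨?_, hl.2⟩
        rw [hf, Sym2.eq_iff]
        tauto
    have := hreach.mono hle
    rw [Sym2.eq_iff] at hf
    rcases hf with ⟨rfl, rfl⟩ | ⟨rfl, rfl⟩
    · exact hr this
    · exact hr this.symm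
  · have hGadj : G.Adj a b := by
      rcases hadj with h1 | h1
      · exact h1
      · exfalso; apply hf
        rw [edge_adj] at h1
        rw [Sym2.eq_iff]; tauto
    have hle : (G ⊔ edge u v) \ fromEdgeSet {s(a, b)} ≤ (G \ fromEdgeSet {s(a, b)}) ⊔ edge u v := by
      intro x y hxy
      simp only [sdiff_adj, sup_adj] at hxy ⊢
      tauto
    have hbr : ¬(G \ fromEdgeSet {s(a, b)}).Reachable a b :=
      ((isAcyclic_iff_forall_adj_isBridge.mp h) hGadj)
    rcases reach_sup_edge (hreach.mono hle) with h1 | ⟨h1, h2⟩ | ⟨h1, h2⟩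
    · exact hbr h1
    · exact hr (((h1.mono (sdiff_le)).symm.trans hGadj.reachable).trans (h2.mono (sdiff_le)).symm)
    · exact hr ((h2.mono (sdiff_le)).trans (hGadj.reachable.symm.trans (h1.mono (sdiff_le))))

lemma exists_not_reachable [Nonempty V] {G : SimpleGraph V} (hc : ¬G.Connected) :
    ∃ u v, ¬G.Reachable u v := by
  have hpc : ¬G.Preconnected := fun hp => hc ((connected_iff G).mpr ⟨hp, ‹Nonempty V›⟩)
  simp only [Preconnected, not_forall] at hpc
  obtain ⟨u, v, h⟩ := hpc
  exact ⟨u, v, h⟩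

lemma ncard_edgeSet_eq {G : SimpleGraph V} [Fintype G.edgeSet] :
    G.edgeSet.ncard = G.edgeFinset.card := Set.ncard_eq_toFinset_card' _

lemma acyclic_card_aux [Nonempty V] :
    ∀ (k : ℕ) (G : SimpleGraph V), G.IsAcyclic →
      (Fintype.card V).choose 2 - G.edgeSet.ncard ≤ k →
      G.edgeSet.ncard + 1 ≤ Fintype.card V := by
  intro k
  induction k with
  | zero =>
    intro G h hk
    by_cases hc : G.Connected
    · have ht : G.IsTree := ⟨hc, h⟩
      have hcard := ht.card_edgeFinset
      rw [← ncard_edgeSet_eq] at hcard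
      have : 1 ≤ Fintype.card V := Fintype.card_pos
      omega
    · exfalso
      obtain ⟨u, v, hr⟩ := exists_not_reachable hc
      have hne : u ≠ v := fun e => hr (e ▸ Reachable.refl u)
      have hna : ¬G.Adj u v := fun ha => hr ha.reachable
      have h1 := G.card_edgeFinset_sup_edge hna hne
      rw [← ncard_edgeSet_eq, ← ncard_edgeSet_eq] at h1
      have h2 := (G ⊔ edge u v).card_edgeFinset_le_card_choose_two
      rw [← ncard_edgeSet_eq] at h2
      omega
  | succ k ih =>
    intro G h hk
    by_cases hc : G.Connected
    · have ht : G.IsTree := ⟨hc, h⟩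
      have hcard := ht.card_edgeFinset
      rw [← ncard_edgeSet_eq] at hcard
      have : 1 ≤ Fintype.card V := Fintype.card_pos
      omega
    · obtain ⟨u, v, hr⟩ := exists_not_reachable hc
      have hne : u ≠ v := fun e => hr (e ▸ Reachable.refl u)
      have hna : ¬G.Adj u v := fun ha => hr ha.reachable
      have h1 := G.card_edgeFinset_sup_edge hna hne
      rw [← ncard_edgeSet_eq, ← ncard_edgeSet_eq] at h1
      have h2 := (G ⊔ edge u v).card_edgeFinset_le_card_choose_two
      rw [← ncard_edgeSet_eq] at h2
      have := ih (G ⊔ edge u v) (sup_edge_acyclic h hr) (by omega)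
      omega

lemma acyclic_disconn_card [Nonempty V] (G : SimpleGraph V) (h : G.IsAcyclic)
    (hc : ¬G.Connected) : G.edgeSet.ncard + 2 ≤ Fintype.card V := by
  obtain ⟨u, v, hr⟩ := exists_not_reachable hc
  have hne : u ≠ v := fun e => hr (e ▸ Reachable.refl u)
  have hna : ¬G.Adj u v := fun ha => hr ha.reachable
  have h1 := G.card_edgeFinset_sup_edge hna hne
  rw [← ncard_edgeSet_eq, ← ncard_edgeSet_eq] at h1
  have := acyclic_card_aux ((Fintype.card V).choose 2) (G ⊔ edge u v)
    (sup_edge_acyclic h hr) (by omega)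
  omega

lemma deleteEdge_edgeSet {G : SimpleGraph V} {a b : V} (hab : G.Adj a b) :
    (G \ fromEdgeSet {s(a, b)}).edgeSet = G.edgeSet \ {s(a, b)} := by
  rw [edgeSet_sdiff, edgeSet_fromEdgeSet, edgeSet_sdiff_sdiff_isDiag]

lemma deleteEdge_ncard {G : SimpleGraph V} {a b : V} (hab : G.Adj a b) :
    (G \ fromEdgeSet {s(a, b)}).edgeSet.ncard + 1 = G.edgeSet.ncard := by
  rw [deleteEdge_edgeSet hab]
  exact Set.ncard_diff_singleton_add_one (G.mem_edgeSet.mpr hab) (Set.toFinite _)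

lemma connected_card_aux [Nonempty V] :
    ∀ (k : ℕ) (G : SimpleGraph V), G.edgeSet.ncard ≤ k → G.Connected →
      Fintype.card V - 1 ≤ G.edgeSet.ncard := by
  intro k
  induction k with
  | zero =>
    intro G hk hc
    by_cases ha : G.IsAcyclic
    · have ht : G.IsTree := ⟨hc, ha⟩
      have hcard := ht.card_edgeFinset
      rw [← ncard_edgeSet_eq] at hcard
      omega
    · rw [isAcyclic_iff_forall_adj_isBridge] at ha
      push_neg at ha
      obtain ⟨a, b, hab, hbr⟩ := ha
      have := deleteEdge_ncard hab
      omega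
  | succ k ih =>
    intro G hk hc
    by_cases ha : G.IsAcyclic
    · have ht : G.IsTree := ⟨hc, ha⟩
      have hcard := ht.card_edgeFinset
      rw [← ncard_edgeSet_eq] at hcard
      omega
    · rw [isAcyclic_iff_forall_adj_isBridge] at ha
      push_neg at ha
      obtain ⟨a, b, hab, hbr⟩ := ha
      have hreach : (G \ fromEdgeSet {s(a, b)}).Reachable a b := by
        by_contra h
        exact hbr h
      set H := G \ fromEdgeSet {s(a, b)} with hH
      have hadjlift : ∀ ⦃u w : V⦄, G.Adj u w → H.Reachable u w := by
        intro u w huw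
        by_cases he : s(u, w) = s(a, b)
        · rw [Sym2.eq_iff] at he
          rcases he with ⟨rfl, rfl⟩ | ⟨rfl, rfl⟩
          · exact hreach
          · exact hreach.symm
        · refine Adj.reachable ?_
          rw [hH, sdiff_adj, fromEdgeSet_adj]
          exact ⟨huw, fun hm => he hm.1⟩
      have hHc : H.Connected := by
        rw [connected_iff]
        exact ⟨fun u v => reach_lift hadjlift (hc.preconnected u v), ‹Nonempty V›⟩
      have hcard := deleteEdge_ncard hab
      rw [← hH] at hcard
      have := ih H (by omega) hHc
      omega

lemma connected_card [Nonempty V] (G : SimpleGraph V) (hc : G.Connected) :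
    Fintype.card V - 1 ≤ G.edgeSet.ncard :=
  connected_card_aux G.edgeSet.ncard G le_rfl hc

lemma ncard_insert_diff {s : Set V} {b x : V} (hb : b ∈ s) (hx : x ∉ s) :
    (insert x (s \ {b})).ncard = s.ncard := by
  have h1 : x ∉ s \ {b} := fun h => hx h.1
  rw [Set.ncard_insert_of_notMem h1 (Set.toFinite _),
    Set.ncard_diff_singleton_add_one hb (Set.toFinite _)]

lemma swap_adj {G : SimpleGraph V} {a b x y : V} (hne_ab : a ≠ b) (hne_xy : x ≠ y)
    (hne_ax : a ≠ x) (hne_ay : a ≠ y) (hne_bx : b ≠ x) (hne_by : b ≠ y) (u w : V) :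
    ((G \ fromEdgeSet {s(a, b), s(x, y)}) ⊔ fromEdgeSet {s(a, x), s(b, y)}).Adj u w ↔
      (G.Adj u w ∧ ¬(u = a ∧ w = b) ∧ ¬(u = b ∧ w = a) ∧ ¬(u = x ∧ w = y) ∧ ¬(u = y ∧ w = x))
      ∨ ((u = a ∧ w = x) ∨ (u = x ∧ w = a) ∨ (u = b ∧ w = y) ∨ (u = y ∧ w = b)) := by
  simp only [sup_adj, sdiff_adj, fromEdgeSet_adj, Set.mem_insert_iff, Set.mem_singleton_iff,
    Sym2.eq_iff]
  constructor
  · rintro (⟨hG, hn⟩ | ⟨h, hne⟩)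
    · left
      refine ⟨hG, ?_, ?_, ?_, ?_⟩ <;> (rintro ⟨rfl, rfl⟩; exact hn ⟨by tauto, hG.ne⟩)
    · right; tauto
  · rintro (⟨hG, h1, h2, h3, h4⟩ | h)
    · left
      exact ⟨hG, fun ⟨hm, _⟩ => by tauto⟩
    · right
      rcases h with ⟨rfl, rfl⟩ | ⟨rfl, rfl⟩ | ⟨rfl, rfl⟩ | ⟨rfl, rfl⟩
      · exact ⟨by tauto, hne_ax⟩
      · exact ⟨by tauto, hne_ax.symm⟩
      · exact ⟨by tauto, hne_by⟩
      · exact ⟨by tauto, hne_by.symm⟩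

lemma swap_lemma {G : SimpleGraph V} {a b x y : V}
    (hab : G.Adj a b) (hxy : G.Adj x y)
    (hax : ¬G.Reachable a x)
    (hnb : (G \ fromEdgeSet {s(a, b)}).Reachable a b) :
    ∃ G' : SimpleGraph V,
      (∀ v, (G'.neighborSet v).ncard = (G.neighborSet v).ncard) ∧
      (∀ u v, G.Reachable u v → G'.Reachable u v) ∧
      G'.Reachable a x := by
  have hrab : G.Reachable a b := hab.reachable
  have hrxy : G.Reachable x y := hxy.reachable
  have hay : ¬G.Reachable a y := fun h => hax (h.trans hrxy.symm)
  have hbx : ¬G.Reachable b x := fun h => hax (hrab.trans h)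
  have hby : ¬G.Reachable b y := fun h => hay (hrab.trans h)
  have hne_ab : a ≠ b := hab.ne
  have hne_xy : x ≠ y := hxy.ne
  have hne_ax : a ≠ x := fun h => hax (h ▸ Reachable.refl a)
  have hne_ay : a ≠ y := fun h => hay (h ▸ Reachable.refl a)
  have hne_bx : b ≠ x := fun h => hbx (h ▸ Reachable.refl b)
  have hne_by : b ≠ y := fun h => hby (h ▸ Reachable.refl b)
  have hnadj_ax : ¬G.Adj a x := fun h => hax h.reachable
  have hnadj_ay : ¬G.Adj a y := fun h => hay h.reachable
  have hnadj_bx : ¬G.Adj b x := fun h => hbx h.reachable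
  have hnadj_by : ¬G.Adj b y := fun h => hby h.reachable
  set G' : SimpleGraph V :=
    (G \ fromEdgeSet {s(a, b), s(x, y)}) ⊔ fromEdgeSet {s(a, x), s(b, y)} with hG'
  have hadj' : ∀ u w : V, G'.Adj u w ↔
      (G.Adj u w ∧ ¬(u = a ∧ w = b) ∧ ¬(u = b ∧ w = a) ∧ ¬(u = x ∧ w = y) ∧ ¬(u = y ∧ w = x))
      ∨ ((u = a ∧ w = x) ∨ (u = x ∧ w = a) ∨ (u = b ∧ w = y) ∨ (u = y ∧ w = b)) :=
    swap_adj hne_ab hne_xy hne_ax hne_ay hne_bx hne_by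
  clear_value G'
  -- degrees
  have hdeg : ∀ v, (G'.neighborSet v).ncard = (G.neighborSet v).ncard := by
    intro v
    by_cases hva : v = a
    · have hNs : G'.neighborSet v = insert x (G.neighborSet v \ {b}) := by
        ext w
        rw [mem_neighborSet, hadj' v w, Set.mem_insert_iff]
        simp only [Set.mem_diff, Set.mem_singleton_iff, mem_neighborSet]
        constructor
        · rintro (⟨hG, h1, h2, h3, h4⟩ | (h | h | h | h))
          · exact Or.inr ⟨hG, fun hw => h1 ⟨hva, hw⟩⟩
          · exact Or.inl h.2
          · exact absurd (hva.symm.trans h.1) hne_ax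
          · exact absurd (hva.symm.trans h.1) hne_ab
          · exact absurd (hva.symm.trans h.1) hne_ay
        · rintro (rfl | ⟨hG, hwb⟩)
          · exact Or.inr (Or.inl ⟨hva, rfl⟩)
          · exact Or.inl ⟨hG, fun h => hwb h.2, fun h => hne_ab (hva.symm.trans h.1),
              fun h => hne_ax (hva.symm.trans h.1), fun h => hne_ay (hva.symm.trans h.1)⟩
      rw [hNs]
      refine ncard_insert_diff ?_ ?_
      · rw [hva]; exact hab
      · rw [hva]; exact fun h => hnadj_ax h
    · by_cases hvb : v = b
      · have hNs : G'.neighborSet v = insert y (G.neighborSet v \ {a}) := by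
          ext w
          rw [mem_neighborSet, hadj' v w, Set.mem_insert_iff]
          simp only [Set.mem_diff, Set.mem_singleton_iff, mem_neighborSet]
          constructor
          · rintro (⟨hG, h1, h2, h3, h4⟩ | (h | h | h | h))
            · exact Or.inr ⟨hG, fun hw => h2 ⟨hvb, hw⟩⟩
            · exact absurd (hvb.symm.trans h.1) (Ne.symm hne_ab)
            · exact absurd (hvb.symm.trans h.1) hne_bx
            · exact Or.inl h.2
            · exact absurd (hvb.symm.trans h.1) hne_by
          · rintro (rfl | ⟨hG, hwa⟩)
            · exact Or.inr (Or.inr (Or.inr (Or.inl ⟨hvb, rfl⟩)))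
            · exact Or.inl ⟨hG, fun h => hne_ab (hvb.symm.trans h.1).symm, fun h => hwa h.2,
                fun h => hne_bx (hvb.symm.trans h.1), fun h => hne_by (hvb.symm.trans h.1)⟩
        rw [hNs]
        refine ncard_insert_diff ?_ ?_
        · rw [hvb]; exact hab.symm
        · rw [hvb]; exact fun h => hnadj_by h
      · by_cases hvx : v = x
        · have hNs : G'.neighborSet v = insert a (G.neighborSet v \ {y}) := by
            ext w
            rw [mem_neighborSet, hadj' v w, Set.mem_insert_iff]
            simp only [Set.mem_diff, Set.mem_singleton_iff, mem_neighborSet]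
            constructor
            · rintro (⟨hG, h1, h2, h3, h4⟩ | (h | h | h | h))
              · exact Or.inr ⟨hG, fun hw => h3 ⟨hvx, hw⟩⟩
              · exact absurd (hvx.symm.trans h.1) (Ne.symm hne_ax)
              · exact Or.inl h.2
              · exact absurd (hvx.symm.trans h.1) (Ne.symm hne_bx)
              · exact absurd (hvx.symm.trans h.1) hne_xy
            · rintro (rfl | ⟨hG, hwy⟩)
              · exact Or.inr (Or.inr (Or.inl ⟨hvx, rfl⟩))
              · exact Or.inl ⟨hG, fun h => hne_ax (hvx.symm.trans h.1).symm,
                  fun h => hne_bx (hvx.symm.trans h.1).symm, fun h => hwy h.2,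
                  fun h => hne_xy (hvx.symm.trans h.1)⟩
          rw [hNs]
          refine ncard_insert_diff ?_ ?_
          · rw [hvx]; exact hxy
          · rw [hvx]; exact fun h => hnadj_ax h.symm
        · by_cases hvy : v = y
          · have hNs : G'.neighborSet v = insert b (G.neighborSet v \ {x}) := by
              ext w
              rw [mem_neighborSet, hadj' v w, Set.mem_insert_iff]
              simp only [Set.mem_diff, Set.mem_singleton_iff, mem_neighborSet]
              constructor
              · rintro (⟨hG, h1, h2, h3, h4⟩ | (h | h | h | h))
                · exact Or.inr ⟨hG, fun hw => h4 ⟨hvy, hw⟩⟩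
                · exact absurd (hvy.symm.trans h.1) (Ne.symm hne_ay)
                · exact absurd (hvy.symm.trans h.1) (Ne.symm hne_xy)
                · exact absurd (hvy.symm.trans h.1) (Ne.symm hne_by)
                · exact Or.inl h.2
              · rintro (rfl | ⟨hG, hwx⟩)
                · exact Or.inr (Or.inr (Or.inr (Or.inr ⟨hvy, rfl⟩)))
                · exact Or.inl ⟨hG, fun h => hne_ay (hvy.symm.trans h.1).symm,
                    fun h => hne_by (hvy.symm.trans h.1).symm,
                    fun h => hne_xy (hvy.symm.trans h.1).symm, fun h => hwx h.2⟩
            rw [hNs]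
            refine ncard_insert_diff ?_ ?_
            · rw [hvy]; exact hxy.symm
            · rw [hvy]; exact fun h => hnadj_by h.symm
          · have hNs : G'.neighborSet v = G.neighborSet v := by
              ext w
              rw [mem_neighborSet, hadj' v w]
              simp only [mem_neighborSet]
              constructor
              · rintro (⟨hG, _⟩ | (h | h | h | h))
                · exact hG
                · exact absurd h.1 hva
                · exact absurd h.1 hvx
                · exact absurd h.1 hvb
                · exact absurd h.1 hvy
              · intro h
                exact Or.inl ⟨h, fun hh => hva hh.1, fun hh => hvb hh.1, fun hh => hvx hh.1,
                  fun hh => hvy hh.1⟩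
            rw [hNs]
  -- reachability
  have hH2le : (G \ fromEdgeSet {s(a, b), s(x, y)}) ≤ G' := hG' ▸ le_sup_left
  have hH2G : (G \ fromEdgeSet {s(a, b), s(x, y)}) ≤ G := sdiff_le
  have heq : G \ fromEdgeSet {s(a, b)} = (G \ fromEdgeSet {s(a, b), s(x, y)}) ⊔ edge x y := by
    ext u w
    simp only [sdiff_adj, fromEdgeSet_adj, Set.mem_insert_iff, Set.mem_singleton_iff, sup_adj,
      edge_adj, Sym2.eq_iff]
    constructor
    · rintro ⟨hG, hn⟩
      by_cases hxyc : (u = x ∧ w = y) ∨ (u = y ∧ w = x)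
      · right; exact ⟨hxyc, hG.ne⟩
      · left
        refine ⟨hG, fun ⟨hm, hne⟩ => ?_⟩
        rcases hm with hm | hm
        · exact hn ⟨hm, hne⟩
        · exact hxyc hm
    · rintro (⟨hG, hn⟩ | ⟨hc, hne⟩)
      · exact ⟨hG, fun ⟨hm, hne⟩ => hn ⟨Or.inl hm, hne⟩⟩
      · rcases hc with ⟨rfl, rfl⟩ | ⟨rfl, rfl⟩
        · exact ⟨hxy, fun ⟨hm, _⟩ => hm.elim (fun h => hne_ax h.1.symm) (fun h => hne_bx h.1.symm)⟩
        · exact ⟨hxy.symm,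
            fun ⟨hm, _⟩ => hm.elim (fun h => hne_ay h.1.symm) (fun h => hne_by h.1.symm)⟩
  have hH2ab : (G \ fromEdgeSet {s(a, b), s(x, y)}).Reachable a b := by
    rw [heq] at hnb
    rcases reach_sup_edge hnb with h1 | ⟨h1, h2⟩ | ⟨h1, h2⟩
    · exact h1
    · exact absurd (h1.mono hH2G) hax
    · exact absurd (h1.mono hH2G) hay
  have hG'ax : G'.Adj a x := by
    rw [hadj']
    exact Or.inr (Or.inl ⟨rfl, rfl⟩)
  have hG'by : G'.Adj b y := by
    rw [hadj']
    exact Or.inr (Or.inr (Or.inr (Or.inl ⟨rfl, rfl⟩)))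
  have hG'ab : G'.Reachable a b := hH2ab.mono hH2le
  have hG'xy : G'.Reachable x y :=
    (hG'ax.reachable.symm.trans hG'ab).trans hG'by.reachable
  have hlift : ∀ ⦃u w : V⦄, G.Adj u w → G'.Reachable u w := by
    intro u w huw
    by_cases h1 : s(u, w) = s(a, b)
    · rw [Sym2.eq_iff] at h1
      rcases h1 with ⟨rfl, rfl⟩ | ⟨rfl, rfl⟩
      · exact hG'ab
      · exact hG'ab.symm
    · by_cases h2 : s(u, w) = s(x, y)
      · rw [Sym2.eq_iff] at h2
        rcases h2 with ⟨rfl, rfl⟩ | ⟨rfl, rfl⟩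
        · exact hG'xy
        · exact hG'xy.symm
      · refine Adj.reachable (hH2le ?_)
        rw [sdiff_adj, fromEdgeSet_adj]
        refine ⟨huw, fun hmm => ?_⟩
        rcases hmm.1 with hm | hm
        · exact h1 hm
        · exact h2 hm
  exact ⟨G', hdeg, fun u v h => reach_lift hlift h, hG'ax.reachable⟩

lemma ncard_neighborSet_eq_degree {G : SimpleGraph V} [DecidableRel G.Adj] (v : V) :
    (G.neighborSet v).ncard = G.degree v := by
  rw [degree, ← Set.ncard_coe_finset, neighborFinset_def, Set.coe_toFinset]

lemma sum_ncard_neighbors (G : SimpleGraph V) :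
    ∑ v, (G.neighborSet v).ncard = 2 * G.edgeSet.ncard := by
  have h1 : ∀ v, (G.neighborSet v).ncard = G.degree v := fun v => ncard_neighborSet_eq_degree v
  calc ∑ v, (G.neighborSet v).ncard = ∑ v, G.degree v := by simp_rw [h1]
    _ = 2 * G.edgeFinset.card := G.sum_degrees_eq_twice_card_edges
    _ = 2 * G.edgeSet.ncard := by rw [ncard_edgeSet_eq]

lemma main_aux [Nonempty V] :
    ∀ (k : ℕ) (G : SimpleGraph V),
      (Finset.univ.filter fun p : V × V => ¬G.Reachable p.1 p.2).card ≤ k →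
      (∀ v, (G.neighborSet v).ncard ≠ 0) →
      Fintype.card V - 1 ≤ G.edgeSet.ncard →
      ∃ G' : SimpleGraph V,
        (∀ v, (G'.neighborSet v).ncard = (G.neighborSet v).ncard) ∧ G'.Connected := by
  intro k
  induction k with
  | zero =>
    intro G hk hdeg hE
    by_cases hc : G.Connected
    · exact ⟨G, fun v => rfl, hc⟩
    · exfalso
      obtain ⟨u, v, huv⟩ := exists_not_reachable hc
      have hmem : (u, v) ∈ Finset.univ.filter fun p : V × V => ¬G.Reachable p.1 p.2 :=
        Finset.mem_filter.mpr ⟨Finset.mem_univ _, huv⟩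
      have := Finset.card_pos.mpr ⟨_, hmem⟩
      omega
  | succ k ih =>
    intro G hk hdeg hE
    by_cases hc : G.Connected
    · exact ⟨G, fun v => rfl, hc⟩
    · have hnotacyclic : ¬G.IsAcyclic := by
        intro ha
        have h2 := acyclic_disconn_card G ha hc
        have := Fintype.card_pos (α := V)
        omega
      rw [isAcyclic_iff_forall_adj_isBridge] at hnotacyclic
      push_neg at hnotacyclic
      obtain ⟨a, b, hab, hbr⟩ := hnotacyclic
      have hreach : (G \ fromEdgeSet {s(a, b)}).Reachable a b := by
        by_contra h; exact hbr h
      obtain ⟨u, v, huv⟩ := exists_not_reachable hc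
      have hax' : ∃ x, ¬G.Reachable a x := by
        by_contra h; push_neg at h; exact huv ((h u).symm.trans (h v))
      obtain ⟨x, hax⟩ := hax'
      obtain ⟨y, hxy⟩ := Set.nonempty_of_ncard_ne_zero (hdeg x)
      obtain ⟨G', hdeg', hlift, hrax⟩ := swap_lemma hab hxy hax hreach
      have hss : (Finset.univ.filter fun p : V × V => ¬G'.Reachable p.1 p.2) ⊆
          Finset.univ.filter fun p : V × V => ¬G.Reachable p.1 p.2 := by
        intro p hp
        rw [Finset.mem_filter] at hp ⊢
        exact ⟨hp.1, fun h => hp.2 (hlift _ _ h)⟩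
      have hmem : (a, x) ∈ Finset.univ.filter fun p : V × V => ¬G.Reachable p.1 p.2 :=
        Finset.mem_filter.mpr ⟨Finset.mem_univ _, hax⟩
      have hnmem : (a, x) ∉ Finset.univ.filter fun p : V × V => ¬G'.Reachable p.1 p.2 := by
        rw [Finset.mem_filter]
        exact fun h => h.2 hrax
      have hlt := Finset.card_lt_card ((Finset.ssubset_iff_of_subset hss).mpr ⟨_, hmem, hnmem⟩)
      have hEsum : G'.edgeSet.ncard = G.edgeSet.ncard := by
        have h1 := sum_ncard_neighbors G'
        have h2 := sum_ncard_neighbors G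
        have h3 : ∑ v, (G'.neighborSet v).ncard = ∑ v, (G.neighborSet v).ncard :=
          Finset.sum_congr rfl fun v _ => hdeg' v
        omega
      obtain ⟨G'', hdeg'', hc''⟩ := ih G' (by omega) (fun v => (hdeg' v).symm ▸ hdeg v)
        (by omega)
      exact ⟨G'', fun v => (hdeg'' v).trans (hdeg' v), hc''⟩

end Aux

theorem stmt4 {n : ℕ} (hn : 1 ≤ n) (d : Fin n → ℕ) (hanti : Antitone d)
    (hpos : ∀ i, 0 < d i) (hg : IsGraphicalSeq d) :
    PotentiallyConnectedSeq d ↔ 2 * n - 2 ≤ ∑ i, d i := by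
  have hne : Nonempty (Fin n) := ⟨⟨0, hn⟩⟩
  constructor
  · rintro ⟨G, hGd, hGc⟩
    have hsum : ∑ v, (G.neighborSet v).ncard = ∑ i, d i := by
      have h := congrArg Multiset.sum hGd
      simpa [degreeMultiset, seqM, Finset.sum] using h
    have h2 := sum_ncard_neighbors G
    have h3 := connected_card G hGc
    rw [Fintype.card_fin] at h3
    omega
  · intro hsum
    obtain ⟨G, hGd⟩ := hg
    have hdegpos : ∀ v, (G.neighborSet v).ncard ≠ 0 := by
      intro v h0
      have hmem : (G.neighborSet v).ncard ∈ degreeMultiset G :=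
        Multiset.mem_map_of_mem _ (Finset.mem_val.mpr (Finset.mem_univ v))
      rw [hGd] at hmem
      obtain ⟨i, _, hi⟩ := Multiset.mem_map.mp hmem
      have := hpos i
      omega
    have hsum2 : ∑ v, (G.neighborSet v).ncard = ∑ i, d i := by
      have h := congrArg Multiset.sum hGd
      simpa [degreeMultiset, seqM, Finset.sum] using h
    have hhs := sum_ncard_neighbors G
    have hE : Fintype.card (Fin n) - 1 ≤ G.edgeSet.ncard := by
      rw [Fintype.card_fin]
      omega
    obtain ⟨G', hdeg', hc'⟩ := main_aux _ G le_rfl hdegpos hE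
    refine ⟨G', ?_, hc'⟩
    rw [← hGd]
    exact Multiset.map_congr rfl (fun v _ => hdeg' v)
end

section
/- An even integer N has a potentially connected graphical partition with exactly n parts if and only if N has a forcibly connected graphical partition with exactly n parts. -/
open SimpleGraph Multiset Finset

lemma reach_map {V W : Type*} {G : SimpleGraph V} {G' : SimpleGraph W} (f : V → W)
    (h : ∀ a b, G.Adj a b → G'.Reachable (f a) (f b)) :
    ∀ {a b : V}, G.Reachable a b → G'.Reachable (f a) (f b) := by
  intro a b hr
  obtain ⟨p⟩ := hr
  induction p with
  | nil => exact SimpleGraph.Reachable.refl _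
  | cons h' _ ih => exact (h _ _ h').trans ih

lemma card_degreeMultiset {V : Type*} [Fintype V] (G : SimpleGraph V) :
    Multiset.card (degreeMultiset G) = Fintype.card V := by
  simp [degreeMultiset, Finset.card_univ]

lemma sum_degreeMultiset {V : Type*} [Fintype V] (G : SimpleGraph V) :
    (degreeMultiset G).sum = ∑ v : V, (G.neighborSet v).ncard := rfl

lemma degreeMultiset_comap {V W : Type*} [Fintype V] [Fintype W] (e : V ≃ W) (G : SimpleGraph W) :
    degreeMultiset (G.comap e) = degreeMultiset G := by
  have h1 : ∀ v, ((G.comap ⇑e).neighborSet v).ncard = (G.neighborSet (e v)).ncard := by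
    intro v
    have h2 : (G.comap ⇑e).neighborSet v = ⇑e.symm '' (G.neighborSet (e v)) := by
      ext w
      simp only [SimpleGraph.mem_neighborSet, SimpleGraph.comap_adj, Set.mem_image]
      constructor
      · intro hw; exact ⟨e w, hw, by simp⟩
      · rintro ⟨x, hx, rfl⟩; simpa using hx
    rw [h2, Set.ncard_image_of_injective _ e.symm.injective]
  unfold degreeMultiset
  simp_rw [h1]
  have h3 : (Finset.univ.val.map fun v => (G.neighborSet (e v)).ncard)
      = (Finset.univ.val.map ⇑e).map fun w => (G.neighborSet w).ncard := by
    rw [Multiset.map_map]; rfl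
  rw [h3]
  have h4 : (Finset.univ.val.map ⇑e) = (Finset.univ : Finset W).val := by
    have := congrArg Finset.val (Finset.map_univ_equiv e)
    simpa using this
  rw [h4]

lemma connected_comap {V W : Type*} (e : V ≃ W) (G : SimpleGraph W) (hG : G.Connected) :
    (G.comap ⇑e).Connected := by
  have hne : Nonempty V := Nonempty.map ⇑e.symm hG.nonempty
  refine SimpleGraph.Connected.mk ?_
  intro a b
  have h := reach_map (G := G) (G' := G.comap ⇑e) ⇑e.symm
    (fun x y hxy => SimpleGraph.Adj.reachable (by simpa using hxy)) (hG.preconnected (e a) (e b))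
  simpa using h

lemma isGraphicalM_degreeMultiset {n : ℕ} (H : SimpleGraph (Fin n)) :
    IsGraphicalM (degreeMultiset H) := by
  have h : Multiset.card (degreeMultiset H) = n := by simpa using card_degreeMultiset H
  exact ⟨H.comap ⇑(finCongr h), degreeMultiset_comap (finCongr h) H⟩

lemma ncard_compl_singleton {V : Type*} [Fintype V] (v : V) :
    ({v}ᶜ : Set V).ncard = Fintype.card V - 1 := by
  have h := Set.ncard_add_ncard_compl ({v} : Set V)
  simp only [Set.ncard_singleton] at h
  have : Nat.card V = Fintype.card V := Nat.card_eq_fintype_card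
  omega

lemma forcibly_of_mem (m : Multiset ℕ) (h1 : 0 < Multiset.card m)
    (h2 : Multiset.card m - 1 ∈ m) : ForciblyConnectedM m := by
  intro G hG
  rw [← hG] at h2
  obtain ⟨v, -, hv⟩ := Multiset.mem_map.mp h2
  have hsub : G.neighborSet v ⊆ ({v}ᶜ : Set (Fin (Multiset.card m))) := by
    intro w hw
    simpa using (SimpleGraph.Adj.ne' (by exact hw : G.Adj v w))
  have hcompl : ({v}ᶜ : Set (Fin (Multiset.card m))).ncard = Multiset.card m - 1 := by
    rw [ncard_compl_singleton]; simp
  have heq : G.neighborSet v = ({v}ᶜ : Set (Fin (Multiset.card m))) :=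
    Set.eq_of_subset_of_ncard_le hsub (by rw [hcompl, hv, hG]) (Set.toFinite _)
  have hadj : ∀ w, w ≠ v → G.Adj v w := by
    intro w hw
    have : w ∈ G.neighborSet v := heq ▸ (by simpa using hw)
    exact this
  have hne : Nonempty (Fin (Multiset.card m)) := ⟨⟨0, h1⟩⟩
  refine SimpleGraph.Connected.mk ?_
  intro a b
  have hra : G.Reachable a v := by
    rcases eq_or_ne a v with rfl | ha
    · exact SimpleGraph.Reachable.refl _
    · exact ((hadj a ha).symm).reachable
  have hrb : G.Reachable v b := by
    rcases eq_or_ne b v with rfl | hb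
    · exact SimpleGraph.Reachable.refl _
    · exact (hadj b hb).reachable
  exact hra.trans hrb

section Swap
variable {V : Type*} (G : SimpleGraph V) (u j z : V)

def swapG : SimpleGraph V where
  Adj a b := (G.Adj a b ∧ s(a, b) ≠ s(u, j)) ∨ (a ≠ b ∧ s(a, b) = s(z, j))
  symm := by
    refine ⟨fun a b h => ?_⟩
    rw [Sym2.eq_swap (a := b) (b := a)]
    rcases h with ⟨h1, h2⟩ | ⟨h1, h2⟩
    · exact Or.inl ⟨h1.symm, h2⟩
    · exact Or.inr ⟨h1.symm, h2⟩
  loopless := by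
    refine ⟨fun a h => ?_⟩
    rcases h with ⟨h1, -⟩ | ⟨h1, -⟩
    · exact G.loopless.irrefl a h1
    · exact h1 rfl

variable {G u j z}
variable (huj : G.Adj u j) (hzj : ¬ G.Adj z j) (hzu : G.Adj z u) (hzj' : z ≠ j)

include huj hzj hzu hzj'

lemma swap_nbr_z : (swapG G u j z).neighborSet z = insert j (G.neighborSet z) := by
  have h1 : z ≠ u := hzu.ne
  have h2 : u ≠ j := huj.ne
  ext w
  simp only [SimpleGraph.mem_neighborSet, swapG, Set.mem_insert_iff, Sym2.eq_iff, ne_eq]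
  constructor
  · rintro (⟨ha, hb⟩ | ⟨ha, hb⟩) <;> tauto
  · rintro (rfl | ha)
    · tauto
    · refine Or.inl ⟨ha, ?_⟩
      rintro (⟨h5, h6⟩ | ⟨h5, h6⟩) <;> simp_all

lemma swap_nbr_u : (swapG G u j z).neighborSet u = G.neighborSet u \ {j} := by
  have h1 : z ≠ u := hzu.ne
  have h2 : u ≠ j := huj.ne
  ext w
  simp only [SimpleGraph.mem_neighborSet, swapG, Set.mem_diff, Set.mem_singleton_iff,
    Sym2.eq_iff, ne_eq]
  constructor
  · rintro (⟨ha, hb⟩ | ⟨ha, hb⟩) <;> tauto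
  · rintro ⟨ha, hb⟩
    refine Or.inl ⟨ha, ?_⟩
    rintro (⟨h5, h6⟩ | ⟨h5, h6⟩) <;> simp_all

lemma swap_nbr_j : (swapG G u j z).neighborSet j = insert z (G.neighborSet j \ {u}) := by
  have h1 : z ≠ u := hzu.ne
  have h2 : u ≠ j := huj.ne
  have h3 : ¬ G.Adj j z := fun h => hzj h.symm
  have h4 : G.Adj j u := huj.symm
  ext w
  simp only [SimpleGraph.mem_neighborSet, swapG, Set.mem_insert_iff, Set.mem_diff,
    Set.mem_singleton_iff, Sym2.eq_iff, ne_eq]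
  constructor
  · rintro (⟨ha, hb⟩ | ⟨ha, hb⟩) <;> tauto
  · rintro (rfl | ⟨ha, hb⟩)
    · exact Or.inr ⟨fun h => hzj' h.symm, by tauto⟩
    · refine Or.inl ⟨ha, ?_⟩
      rintro (⟨h5, h6⟩ | ⟨h5, h6⟩) <;> simp_all

lemma swap_nbr_other (a : V) (hau : a ≠ u) (haj : a ≠ j) (haz : a ≠ z) :
    (swapG G u j z).neighborSet a = G.neighborSet a := by
  ext w
  simp only [SimpleGraph.mem_neighborSet, swapG, Sym2.eq_iff, ne_eq]
  constructor
  · rintro (⟨ha, hb⟩ | ⟨ha, hb⟩) <;> tauto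
  · intro h
    refine Or.inl ⟨h, ?_⟩
    rintro (⟨h5, h6⟩ | ⟨h5, h6⟩) <;> simp_all

lemma swap_sum [Fintype V] [DecidableEq V] :
    (degreeMultiset (swapG G u j z)).sum = (degreeMultiset G).sum := by
  have key : ∀ x : V, ((swapG G u j z).neighborSet x).ncard + (if x = u then 1 else 0)
      = (G.neighborSet x).ncard + (if x = z then 1 else 0) := by
    intro x
    rcases eq_or_ne x z with rfl | hxz
    · have e1 := swap_nbr_z huj hzj hzu hzj'
      rw [e1, Set.ncard_insert_of_notMem (by simpa using hzj) (Set.toFinite _),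
        if_neg hzu.ne, if_pos rfl]
    rcases eq_or_ne x u with rfl | hxu
    · have e1 := swap_nbr_u huj hzj hzu hzj'
      have e2 := Set.ncard_diff_singleton_add_one (by simpa using huj : j ∈ G.neighborSet x)
        (Set.toFinite _)
      rw [e1, if_pos rfl, if_neg hxz]
      omega
    rcases eq_or_ne x j with rfl | hxj
    · have e1 := swap_nbr_j huj hzj hzu hzj'
      have hznm : z ∉ G.neighborSet x \ ({u} : Set V) := by
        simp only [Set.mem_diff, SimpleGraph.mem_neighborSet, not_and]
        exact fun h => absurd (h.symm) hzj
      have e2 := Set.ncard_diff_singleton_add_one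
        (by simpa using huj.symm : u ∈ G.neighborSet x) (Set.toFinite _)
      rw [e1, Set.ncard_insert_of_notMem hznm (Set.toFinite _), if_neg hxu, if_neg hxz]
      omega
    · rw [swap_nbr_other huj hzj hzu hzj' x hxu hxj hxz, if_neg hxu, if_neg hxz]
  have hsum := Finset.sum_congr rfl (fun x (_ : x ∈ Finset.univ) => key x)
  rw [Finset.sum_add_distrib, Finset.sum_add_distrib] at hsum
  simp only [Finset.sum_ite_eq' Finset.univ, Finset.mem_univ, if_pos] at hsum
  have h1 : (degreeMultiset (swapG G u j z)).sum
      = ∑ x : V, ((swapG G u j z).neighborSet x).ncard := rfl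
  have h2 : (degreeMultiset G).sum = ∑ x : V, (G.neighborSet x).ncard := rfl
  omega

end Swap

lemma exists_bridge {V : Type*} {G : SimpleGraph V} (z : V) :
    ∀ {a b : V} (_ : G.Walk a b), (a = z ∨ G.Adj z a) → ¬(b = z ∨ G.Adj z b) →
    ∃ u x, G.Adj z u ∧ G.Adj u x ∧ ¬ G.Adj z x ∧ x ≠ z := by
  intro a b p
  induction p with
  | nil => intro h1 h2; exact absurd h1 h2
  | @cons a c b h p ih =>
    intro h1 h2
    by_cases hc : c = z ∨ G.Adj z c
    · exact ih hc h2
    · push_neg at hc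
      rcases h1 with rfl | h1
      · exact absurd (Or.inr h) (by push_neg; exact ⟨hc.1, hc.2⟩)
      · exact ⟨a, c, h1, h, hc.2, hc.1⟩

lemma swap_connected {V : Type*} {G : SimpleGraph V} {u j z : V} (huj : G.Adj u j)
    (hzj : ¬ G.Adj z j) (hzu : G.Adj z u) (hzj' : z ≠ j) (hG : G.Connected) :
    (swapG G u j z).Connected := by
  have hzu' : z ≠ u := hzu.ne
  have hAzu : (swapG G u j z).Adj z u := by
    refine Or.inl ⟨hzu, ?_⟩
    intro h
    rw [Sym2.eq_iff] at h
    rcases h with ⟨h5, h6⟩ | ⟨h5, h6⟩ <;> simp_all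
  have hAzj : (swapG G u j z).Adj z j := Or.inr ⟨hzj', rfl⟩
  have key : ∀ a b, G.Adj a b → (swapG G u j z).Reachable a b := by
    intro a b hab
    by_cases hs : s(a, b) = s(u, j)
    · rw [Sym2.eq_iff] at hs
      have hruj : (swapG G u j z).Reachable u j :=
        (hAzu.symm.reachable).trans hAzj.reachable
      rcases hs with ⟨rfl, rfl⟩ | ⟨rfl, rfl⟩
      · exact hruj
      · exact hruj.symm
    · exact (SimpleGraph.Adj.reachable (Or.inl ⟨hab, hs⟩))
  have hne : Nonempty V := hG.nonempty
  refine SimpleGraph.Connected.mk ?_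
  intro a b
  exact reach_map (G := G) id key (hG.preconnected a b)

lemma exists_dominating {n : ℕ} : ∀ (k : ℕ) (G : SimpleGraph (Fin (n + 1))), G.Connected →
    n - (G.neighborSet 0).ncard ≤ k →
    ∃ H : SimpleGraph (Fin (n + 1)), (∀ w, w ≠ 0 → H.Adj 0 w) ∧
      (degreeMultiset H).sum = (degreeMultiset G).sum := by
  intro k
  induction k with
  | zero =>
    intro G hG hk
    refine ⟨G, fun w hw => ?_, rfl⟩
    by_contra hadj
    have hss : G.neighborSet 0 ⊂ ({0}ᶜ : Set (Fin (n + 1))) := by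
      constructor
      · intro x hx; simpa using (SimpleGraph.Adj.ne' (hx : G.Adj 0 x))
      · intro hsub
        exact hadj (hsub (by simpa using hw))
    have hlt := Set.ncard_lt_ncard hss (Set.toFinite _)
    have hc : ({0}ᶜ : Set (Fin (n + 1))).ncard = n := by
      have h := Set.ncard_add_ncard_compl ({0} : Set (Fin (n + 1)))
      simp only [Set.ncard_singleton] at h
      have h2 : Nat.card (Fin (n + 1)) = n + 1 := by simp
      omega
    omega
  | succ k ih =>
    intro G hG hk
    by_cases hdom : ∀ w, w ≠ 0 → G.Adj 0 w
    · exact ⟨G, hdom, rfl⟩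
    push_neg at hdom
    obtain ⟨j₀, hj0, hnadj⟩ := hdom
    obtain ⟨p⟩ := hG.preconnected 0 j₀
    obtain ⟨u, x, hzu, hux, hzx, hx0⟩ :=
      exists_bridge (0 : Fin (n + 1)) p (Or.inl rfl) (by push_neg; exact ⟨hj0, hnadj⟩)
    have hz' : (0 : Fin (n + 1)) ≠ x := hx0.symm
    set H₁ := swapG G u x 0 with hH₁
    have hconn : H₁.Connected := swap_connected hux hzx hzu hz' hG
    have hdeg : (H₁.neighborSet 0).ncard = (G.neighborSet 0).ncard + 1 := by
      rw [hH₁, swap_nbr_z hux hzx hzu hz',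
        Set.ncard_insert_of_notMem (by simpa using hzx) (Set.toFinite _)]
    have hmeas : n - (H₁.neighborSet 0).ncard ≤ k := by omega
    obtain ⟨H, hHdom, hHsum⟩ := ih H₁ hconn hmeas
    exact ⟨H, hHdom, by rw [hHsum, hH₁, swap_sum hux hzx hzu hz']⟩

theorem stmt10 (N n : ℕ) (hN : Even N) :
    (∃ m : Multiset ℕ, Multiset.card m = n ∧ 0 ∉ m ∧ m.sum = N ∧
      IsGraphicalM m ∧ PotentiallyConnectedM m) ↔
    (∃ m : Multiset ℕ, Multiset.card m = n ∧ 0 ∉ m ∧ m.sum = N ∧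
      IsGraphicalM m ∧ ForciblyConnectedM m) := by
  constructor
  · rintro ⟨m, hcard, h0, hsum, -, hpot⟩
    obtain ⟨G, hGdeg, hGconn⟩ := hpot
    have hdegmem : ∀ v : Fin (Multiset.card m), (G.neighborSet v).ncard ∈ m := by
      intro v
      have hmm : (G.neighborSet v).ncard ∈ degreeMultiset G :=
        Multiset.mem_map.mpr ⟨v, Finset.mem_val.mpr (Finset.mem_univ v), rfl⟩
      rwa [hGdeg] at hmm
    have hdegpos : ∀ v : Fin (Multiset.card m), (G.neighborSet v).ncard ≠ 0 := by
      intro v hv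
      exact h0 (hv ▸ hdegmem v)
    have hne : Nonempty (Fin (Multiset.card m)) := hGconn.nonempty
    obtain ⟨v₀⟩ := hne
    have hnbr : (G.neighborSet v₀).Nonempty := by
      rw [← Set.ncard_pos (Set.toFinite _)]
      exact Nat.pos_of_ne_zero (hdegpos v₀)
    obtain ⟨w₀, hw₀⟩ := hnbr
    have h2le : 2 ≤ Multiset.card m := by
      have h1 : 1 < Fintype.card (Fin (Multiset.card m)) :=
        Fintype.one_lt_card_iff.mpr ⟨w₀, v₀, (hw₀ : G.Adj v₀ w₀).ne'⟩
      simp at h1; omega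
    obtain ⟨k, hk⟩ : ∃ k, Multiset.card m = k + 2 := ⟨Multiset.card m - 2, by omega⟩
    set e : Fin (k + 2) ≃ Fin (Multiset.card m) := (finCongr hk).symm with he
    set G' : SimpleGraph (Fin (k + 2)) := G.comap ⇑e with hG'
    have hG'deg : degreeMultiset G' = m := by
      rw [hG', degreeMultiset_comap e G, hGdeg]
    have hG'conn : G'.Connected := connected_comap e G hGconn
    obtain ⟨H, hdom, hsumH⟩ := exists_dominating (n := k + 1) (k + 1) G' hG'conn (Nat.sub_le _ _)
    have hnbr0 : H.neighborSet 0 = ({0}ᶜ : Set (Fin (k + 2))) := by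
      ext w
      simp only [SimpleGraph.mem_neighborSet, Set.mem_compl_iff, Set.mem_singleton_iff]
      exact ⟨fun h => h.ne', fun h => hdom w h⟩
    have hdeg0 : (H.neighborSet 0).ncard = k + 1 := by
      rw [hnbr0, ncard_compl_singleton]
      simp
    refine ⟨degreeMultiset H, ?_, ?_, ?_, ?_, ?_⟩
    · rw [card_degreeMultiset, Fintype.card_fin, ← hk, hcard]
    · intro hmem
      obtain ⟨v, -, hv⟩ := Multiset.mem_map.mp hmem
      rcases eq_or_ne v 0 with rfl | hv0
      · omega
      · have : ((0 : Fin (k + 2))) ∈ H.neighborSet v := (hdom v hv0).symm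
        have hpos : 0 < (H.neighborSet v).ncard :=
          (Set.ncard_pos (Set.toFinite _)).mpr ⟨0, this⟩
        omega
    · rw [hsumH, hG'deg, hsum]
    · exact isGraphicalM_degreeMultiset H
    · apply forcibly_of_mem
      · rw [card_degreeMultiset, Fintype.card_fin]
        omega
      · rw [card_degreeMultiset, Fintype.card_fin]
        have : k + 1 + 1 - 1 = (H.neighborSet 0).ncard := by omega
        rw [this]
        exact Multiset.mem_map.mpr ⟨0, Finset.mem_val.mpr (Finset.mem_univ _), rfl⟩
  · rintro ⟨m, h1, h2, h3, hgr, hfc⟩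
    obtain ⟨G, hG⟩ := hgr
    exact ⟨m, h1, h2, h3, ⟨G, hG⟩, ⟨G, hG, hfc G hG⟩⟩
end

section
/- Let N be even with 2n − 2 ≤ N ≤ n(n−1), and set b = ⌊(N−n+1)/(n−1)⌋ and a = N − (n−1)(b+1). Then the partition of N with n parts consisting of one part equal to n−1, a parts equal to b+1, and n−1−a parts equal to b is a graphical partition, and it is forcibly connected. -/
open SimpleGraph Multiset Finset

section Aux

set_option linter.unusedSectionVars false

lemma ncard_neighborSet {V : Type*} [Fintype V] [DecidableEq V] (G : SimpleGraph V)
    [DecidableRel G.Adj] (v : V) :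
    (G.neighborSet v).ncard = (Finset.univ.filter (G.Adj v)).card := by
  rw [Set.ncard_eq_toFinset_card']
  congr 1
  ext u
  simp only [Finset.mem_filter, Finset.mem_univ, true_and]
  rw [Set.mem_toFinset, SimpleGraph.mem_neighborSet]

lemma map_univ_indicator {α : Type*} [Fintype α] [DecidableEq α] (S : Finset α) (u w : ℕ) :
    Multiset.map (fun x => if x ∈ S then u else w) Finset.univ.val
      = Multiset.replicate S.card u + Multiset.replicate (Fintype.card α - S.card) w := by
  have hsub : S.val ≤ Finset.univ.val := Finset.val_le_iff.mpr (Finset.subset_univ S)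
  have hsplit : (Finset.univ.val : Multiset α) = S.val + (Finset.univ \ S).val := by
    rw [Finset.sdiff_val, add_comm]; exact (tsub_add_cancel_of_le hsub).symm
  rw [hsplit, Multiset.map_add]
  congr 1
  · rw [Multiset.eq_replicate]
    constructor
    · simp
    · intro x hx
      simp only [Multiset.mem_map] at hx
      obtain ⟨y, hy, rfl⟩ := hx
      simp [Finset.mem_val.mp hy]
  · rw [Multiset.eq_replicate]
    constructor
    · simp [Finset.card_sdiff_of_subset (Finset.subset_univ S)]
    · intro x hx
      simp only [Multiset.mem_map] at hx
      obtain ⟨y, hy, rfl⟩ := hx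
      have := Finset.mem_sdiff.mp (Finset.mem_val.mp hy)
      simp [this.2]

lemma forcibly_of_mem_s11 (n : ℕ) (hn : 2 ≤ n) (m : Multiset ℕ)
    (hcard : Multiset.card m = n) (hmem : (n - 1) ∈ m) : ForciblyConnectedM m := by
  intro G hG
  classical
  have hcardF : Fintype.card (Fin (Multiset.card m)) = n := by simp [hcard]
  rw [← hG] at hmem
  simp only [degreeMultiset, Multiset.mem_map] at hmem
  obtain ⟨v, -, hv⟩ := hmem
  rw [ncard_neighborSet] at hv
  have hsub : Finset.univ.filter (G.Adj v) ⊆ Finset.univ.erase v := by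
    intro u hu
    simp only [Finset.mem_filter] at hu
    exact Finset.mem_erase.mpr ⟨(G.ne_of_adj hu.2).symm, Finset.mem_univ u⟩
  have hcardle : (Finset.univ.erase v).card ≤ (Finset.univ.filter (G.Adj v)).card := by
    rw [hv, Finset.card_erase_of_mem (Finset.mem_univ v), Finset.card_univ, hcardF]
  have heq := Finset.eq_of_subset_of_card_le hsub hcardle
  have hadj : ∀ u, u ≠ v → G.Adj v u := by
    intro u hu
    have : u ∈ Finset.univ.erase v := Finset.mem_erase.mpr ⟨hu, Finset.mem_univ u⟩
    rw [← heq] at this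
    exact (Finset.mem_filter.mp this).2
  rw [SimpleGraph.connected_iff]
  refine ⟨?_, ⟨v⟩⟩
  intro x y
  rcases eq_or_ne x y with rfl | hxy
  · exact SimpleGraph.Reachable.refl x
  · have hxv : G.Reachable x v := by
      rcases eq_or_ne x v with rfl | h
      · exact SimpleGraph.Reachable.refl x
      · exact ((hadj x h).symm).reachable
    have hvy : G.Reachable v y := by
      rcases eq_or_ne y v with rfl | h
      · exact SimpleGraph.Reachable.refl y
      · exact (hadj y h).reachable
    exact hxv.trans hvy


set_option linter.unusedSectionVars false

variable {m : ℕ}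

def pm (m h s : ℕ) (x : ZMod m) : Option (ZMod m) :=
  if x.val < h then some (x + (s : ZMod m))
  else if s ≤ x.val ∧ x.val < s + h then some (x - (s : ZMod m)) else none

section pmlemmas

variable [NeZero m] {h s : ℕ} (hhs : h ≤ s) (hsm : s + h ≤ m)

include hhs hsm

lemma s_val (hh : 0 < h) : ((s : ZMod m)).val = s := ZMod.val_natCast_of_lt (by omega)

lemma pm_val_add {x : ZMod m} (hx : x.val < h) : (x + (s : ZMod m)).val = x.val + s := by
  rw [ZMod.val_add, s_val hhs hsm (by omega), Nat.mod_eq_of_lt (by omega)]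

lemma pm_val_sub {x : ZMod m} (hx1 : s ≤ x.val) (hx2 : x.val < s + h) :
    (x - (s : ZMod m)).val = x.val - s := by
  have hlt : x.val - s < m := by omega
  have key : ((x.val - s : ℕ) : ZMod m) = x - (s : ZMod m) := by
    have h2 : ((x.val - s : ℕ) : ZMod m) + (s : ZMod m) = x := by
      rw [← Nat.cast_add]
      have h3 : x.val - s + s = x.val := by omega
      rw [h3, ZMod.natCast_val, ZMod.cast_id]
    linear_combination h2
  rw [← key, ZMod.val_natCast_of_lt hlt]

lemma pm_symm {x y : ZMod m} (hxy : pm m h s x = some y) : pm m h s y = some x := by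
  unfold pm at hxy ⊢
  split_ifs at hxy with h1 h2
  · -- y = x + s
    obtain rfl : y = x + (s : ZMod m) := by injection hxy with e; exact e.symm
    have hv : (x + (s : ZMod m)).val = x.val + s := pm_val_add hhs hsm h1
    rw [if_neg (by omega), if_pos (by omega)]
    congr 1
    ring
  · -- y = x - s
    obtain rfl : y = x - (s : ZMod m) := by injection hxy with e; exact e.symm
    have hv : (x - (s : ZMod m)).val = x.val - s := pm_val_sub hhs hsm h2.1 h2.2
    rw [if_pos (by omega)]
    congr 1
    ring

lemma pm_ne_self {x y : ZMod m} (hxy : pm m h s x = some y) : y ≠ x := by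
  unfold pm at hxy
  split_ifs at hxy with h1 h2
  · obtain rfl : y = x + (s : ZMod m) := by injection hxy with e; exact e.symm
    have hv : (x + (s : ZMod m)).val = x.val + s := pm_val_add hhs hsm h1
    intro hc
    rw [hc] at hv
    omega
  · obtain rfl : y = x - (s : ZMod m) := by injection hxy with e; exact e.symm
    have hv : (x - (s : ZMod m)).val = x.val - s := pm_val_sub hhs hsm h2.1 h2.2
    intro hc
    rw [hc] at hv
    omega

lemma pm_diff {x y : ZMod m} (hxy : pm m h s x = some y) :
    y - x = (s : ZMod m) ∨ y - x = -(s : ZMod m) := by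
  unfold pm at hxy
  split_ifs at hxy with h1 h2
  · obtain rfl : y = x + (s : ZMod m) := by injection hxy with e; exact e.symm
    left; ring
  · obtain rfl : y = x - (s : ZMod m) := by injection hxy with e; exact e.symm
    right; ring

lemma pm_isSome_iff {x : ZMod m} :
    (pm m h s x).isSome = true ↔ (x.val < h ∨ (s ≤ x.val ∧ x.val < s + h)) := by
  unfold pm
  split_ifs with h1 h2
  · simp [h1]
  · simp [h1, h2]
  · simp [h1, h2]

lemma card_pm_matched :
    (Finset.univ.filter fun x : ZMod m => (pm m h s x).isSome).card = 2 * h := by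
  have hbij : (Finset.univ.filter fun x : ZMod m => (pm m h s x).isSome).card
      = ((Finset.range m).filter fun i => i < h ∨ (s ≤ i ∧ i < s + h)).card := by
    apply Finset.card_bij (fun x _ => x.val)
    · intro x hx
      simp only [Finset.mem_filter, Finset.mem_range] at *
      exact ⟨ZMod.val_lt x, (pm_isSome_iff hhs hsm).mp (by simpa using hx)⟩
    · intro x _ y _ hxy
      exact ZMod.val_injective m hxy
    · intro i hi
      simp only [Finset.mem_filter, Finset.mem_range] at hi
      refine ⟨(i : ZMod m), ?_, ?_⟩
      · simp only [Finset.mem_filter, Finset.mem_univ, true_and]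
        rw [pm_isSome_iff hhs hsm, ZMod.val_natCast_of_lt hi.1]
        exact hi.2
      · exact ZMod.val_natCast_of_lt hi.1
  rw [hbij]
  have : ((Finset.range m).filter fun i => i < h ∨ (s ≤ i ∧ i < s + h))
      = Finset.range h ∪ Finset.Ico s (s + h) := by
    ext i
    simp only [Finset.mem_filter, Finset.mem_range, Finset.mem_union, Finset.mem_Ico]
    omega
  rw [this, Finset.card_union_of_disjoint, Finset.card_range, Nat.card_Ico]
  · omega
  · rw [Finset.disjoint_left]
    intro i hi hi'
    simp only [Finset.mem_range] at hi
    simp only [Finset.mem_Ico] at hi'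
    omega

end pmlemmas


def Dset (m k : ℕ) : Finset (ZMod m) :=
  ((Finset.Icc 1 k).image fun i : ℕ => (i : ZMod m)) ∪ ((Finset.Icc 1 k).image fun i : ℕ => -(i : ZMod m))

section dlemmas

variable [NeZero m] {k : ℕ} (hk : 2 * k ≤ m - 1)

include hk

lemma neg_natCast_eq (i : ℕ) (h1 : 1 ≤ i) (h2 : i ≤ m) : -(i : ZMod m) = ((m - i : ℕ) : ZMod m) := by
  have : ((m - i : ℕ) : ZMod m) = (m : ZMod m) - (i : ZMod m) := by
    exact_mod_cast Nat.cast_sub h2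
  rw [this, ZMod.natCast_self]
  ring

lemma mem_Dset_iff {z : ZMod m} :
    z ∈ Dset m k ↔ (1 ≤ z.val ∧ z.val ≤ k) ∨ (m - k ≤ z.val ∧ z.val ≤ m - 1) := by
  have hm : 0 < m := Nat.pos_of_ne_zero (NeZero.ne m)
  unfold Dset
  simp only [Finset.mem_union, Finset.mem_image, Finset.mem_Icc]
  constructor
  · rintro (⟨i, ⟨hi1, hi2⟩, rfl⟩ | ⟨i, ⟨hi1, hi2⟩, rfl⟩)
    · left
      rw [ZMod.val_natCast_of_lt (by omega)]
      omega
    · right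
      rw [neg_natCast_eq hk i hi1 (by omega), ZMod.val_natCast_of_lt (by omega)]
      omega
  · rintro (⟨h1, h2⟩ | ⟨h1, h2⟩)
    · left
      exact ⟨z.val, ⟨h1, h2⟩, by rw [ZMod.natCast_val, ZMod.cast_id]⟩
    · right
      refine ⟨m - z.val, ⟨by omega, by omega⟩, ?_⟩
      rw [neg_natCast_eq hk (m - z.val) (by omega) (by omega)]
      have : m - (m - z.val) = z.val := by
        have := ZMod.val_lt z
        omega
      rw [this, ZMod.natCast_val, ZMod.cast_id]

lemma zero_not_mem_Dset : (0 : ZMod m) ∉ Dset m k := by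
  have hm : 0 < m := Nat.pos_of_ne_zero (NeZero.ne m)
  rw [mem_Dset_iff hk, ZMod.val_zero]
  rintro (⟨h1, h2⟩ | ⟨h1, h2⟩) <;> omega

lemma neg_mem_Dset {z : ZMod m} (hz : z ∈ Dset m k) : -z ∈ Dset m k := by
  unfold Dset at hz ⊢
  simp only [Finset.mem_union, Finset.mem_image] at hz ⊢
  rcases hz with ⟨i, hi, rfl⟩ | ⟨i, hi, rfl⟩
  · right; exact ⟨i, hi, rfl⟩
  · left; exact ⟨i, hi, by ring⟩

lemma card_Dset : (Dset m k).card = 2 * k := by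
  have hm : 0 < m := Nat.pos_of_ne_zero (NeZero.ne m)
  unfold Dset
  rw [Finset.card_union_of_disjoint, Finset.card_image_of_injOn, Finset.card_image_of_injOn,
    Nat.card_Icc]
  · omega
  · intro i hi j hj hij
    simp only [Finset.coe_Icc, Set.mem_Icc] at hi hj
    have ha : (-(i : ZMod m)).val = m - i := by
      rw [neg_natCast_eq hk i hi.1 (by omega), ZMod.val_natCast_of_lt (by omega)]
    have hb : (-(j : ZMod m)).val = m - j := by
      rw [neg_natCast_eq hk j hj.1 (by omega), ZMod.val_natCast_of_lt (by omega)]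
    have hc := congrArg ZMod.val hij
    simp only at hc
    rw [ha, hb] at hc
    omega
  · intro i hi j hj hij
    simp only [Finset.coe_Icc, Set.mem_Icc] at hi hj
    have := congrArg ZMod.val hij
    rw [ZMod.val_natCast_of_lt (by omega), ZMod.val_natCast_of_lt (by omega)] at this
    omega
  · rw [Finset.disjoint_left]
    intro z hz1 hz2
    simp only [Finset.mem_image, Finset.mem_Icc] at hz1 hz2
    obtain ⟨i, hi, rfl⟩ := hz1
    obtain ⟨j, hj, hji⟩ := hz2
    have h1 : ((i : ZMod m)).val = i := ZMod.val_natCast_of_lt (by omega)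
    have h2 : (-(j : ZMod m)).val = m - j := by
      rw [neg_natCast_eq hk j hj.1 (by omega), ZMod.val_natCast_of_lt (by omega)]
    have := congrArg ZMod.val hji
    omega

lemma natCast_not_mem_Dset {j : ℕ} (hj1 : k + 1 ≤ j) (hj2 : j ≤ m - k - 1) :
    (j : ZMod m) ∉ Dset m k ∧ -(j : ZMod m) ∉ Dset m k := by
  have hm : 0 < m := Nat.pos_of_ne_zero (NeZero.ne m)
  have hv : ((j : ZMod m)).val = j := ZMod.val_natCast_of_lt (by omega)
  have hv2 : (-(j : ZMod m)).val = m - j := by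
    rw [neg_natCast_eq hk j (by omega) (by omega), ZMod.val_natCast_of_lt (by omega)]
  constructor <;> rw [mem_Dset_iff hk] <;> omega

end dlemmas

def RAdj (m : ℕ) (D : Finset (ZMod m)) (h s : ℕ) (c : Bool) (x y : ZMod m) : Prop :=
  x ≠ y ∧ (Xor' (Xor' (y - x ∈ D) (pm m h s x = some y)) (c = true))

instance (D : Finset (ZMod m)) (h s : ℕ) (c : Bool) : DecidableRel (RAdj m D h s c) := by
  intro x y
  unfold RAdj Xor'
  infer_instance

section radj

variable [NeZero m] {D : Finset (ZMod m)} {h s : ℕ}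
  (hD0 : (0 : ZMod m) ∉ D) (hDs : ∀ z ∈ D, -z ∈ D)
  (hhs : h ≤ s) (hsm : s + h ≤ m)
  (hsD : (s : ZMod m) ∉ D) (hsD' : -(s : ZMod m) ∉ D)

include hDs hhs hsm in
lemma RAdj_symm {c : Bool} {x y : ZMod m} (hxy : RAdj m D h s c x y) : RAdj m D h s c y x := by
  obtain ⟨hne, hx⟩ := hxy
  refine ⟨hne.symm, ?_⟩
  have h1 : (y - x ∈ D) ↔ (x - y ∈ D) := by
    constructor
    · intro hh; have := hDs _ hh; rwa [neg_sub] at this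
    · intro hh; have := hDs _ hh; rwa [neg_sub] at this
  have h2 : (pm m h s x = some y) ↔ (pm m h s y = some x) :=
    ⟨pm_symm hhs hsm, pm_symm hhs hsm⟩
  unfold Xor' Xor at hx ⊢
  tauto

include hD0 hDs hhs hsm hsD hsD' in
lemma RAdj_card_false (y : ZMod m) :
    (Finset.univ.filter fun x => RAdj m D h s false x y).card
      = D.card + (if (pm m h s y).isSome then 1 else 0) := by
  classical
  have hinj : Set.InjOn (fun d => y - d) (D : Set (ZMod m)) := by
    intro d1 _ d2 _ hd
    simpa using hd
  have hAcard : (D.image fun d => y - d).card = D.card := Finset.card_image_of_injOn hinj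
  have hmemA : ∀ x : ZMod m, x ∈ D.image (fun d => y - d) ↔ y - x ∈ D := by
    intro x
    simp only [Finset.mem_image]
    constructor
    · rintro ⟨d, hd, rfl⟩
      simpa using hd
    · intro hx
      exact ⟨y - x, hx, by ring⟩
  cases hpy : pm m h s y with
  | none =>
    have hset : (Finset.univ.filter fun x => RAdj m D h s false x y) = D.image (fun d => y - d) := by
      ext x
      simp only [Finset.mem_filter, Finset.mem_univ, true_and, hmemA]
      unfold RAdj Xor' Xor
      constructor
      · rintro ⟨hne, hx⟩
        have hnp : ¬ (pm m h s x = some y) := by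
          intro hc
          rw [pm_symm hhs hsm hc] at hpy
          exact absurd hpy (by simp)
        tauto
      · intro hx
        have hne : x ≠ y := by
          intro hc; subst hc
          have : x - x ∈ D := hx
          rw [sub_self] at this
          exact hD0 this
        have hnp : ¬ (pm m h s x = some y) := by
          intro hc
          rw [pm_symm hhs hsm hc] at hpy
          exact absurd hpy (by simp)
        tauto
    rw [hset, hAcard]
    simp
  | some w =>
    have hwdiff : y - w ∉ D := by
      rcases pm_diff hhs hsm hpy with hd | hd
      · have : y - w = -(s : ZMod m) := by linear_combination -hd
        rw [this]; exact hsD'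
      · have : y - w = (s : ZMod m) := by linear_combination -hd
        rw [this]; exact hsD
    have hwA : w ∉ D.image (fun d => y - d) := by
      rw [hmemA]; exact hwdiff
    have hwy : w ≠ y := pm_ne_self hhs hsm hpy
    have hiff : ∀ x : ZMod m, pm m h s x = some y ↔ x = w := by
      intro x
      constructor
      · intro hc
        have := pm_symm hhs hsm hc
        rw [hpy] at this
        injection this with e
        exact e.symm
      · rintro rfl
        exact pm_symm hhs hsm hpy
    have hset : (Finset.univ.filter fun x => RAdj m D h s false x y)
        = insert w (D.image (fun d => y - d)) := by
      ext x
      simp only [Finset.mem_filter, Finset.mem_univ, true_and, Finset.mem_insert, hmemA]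
      unfold RAdj Xor' Xor
      rw [hiff x]
      rcases eq_or_ne x w with rfl | hxw
      · simp [hwy, hwdiff]
      · constructor
        · rintro ⟨hne, hx⟩
          right
          tauto
        · rintro (hc | hx)
          · exact absurd hc hxw
          · have hne : x ≠ y := by
              intro hc; subst hc
              rw [sub_self] at hx
              exact hD0 hx
            tauto
    rw [hset, Finset.card_insert_of_notMem hwA, hAcard]
    simp [add_comm]

include hD0 hDs hhs hsm hsD hsD' in
lemma RAdj_card_true (y : ZMod m) :
    (Finset.univ.filter fun x => RAdj m D h s true x y).card
      = (m - 1) - (D.card + (if (pm m h s y).isSome then 1 else 0)) := by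
  classical
  have hsub : (Finset.univ.filter fun x => RAdj m D h s false x y) ⊆ Finset.univ.erase y := by
    intro x hx
    simp only [Finset.mem_filter] at hx
    exact Finset.mem_erase.mpr ⟨hx.2.1, Finset.mem_univ x⟩
  have hset : (Finset.univ.filter fun x => RAdj m D h s true x y)
      = (Finset.univ.erase y) \ (Finset.univ.filter fun x => RAdj m D h s false x y) := by
    ext x
    simp only [Finset.mem_sdiff, Finset.mem_erase, Finset.mem_filter, Finset.mem_univ, true_and,
      and_true]
    unfold RAdj Xor' Xor
    constructor
    · rintro ⟨hne, hx⟩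
      refine ⟨hne, ?_⟩
      tauto
    · rintro ⟨hne, hx⟩
      refine ⟨hne, ?_⟩
      tauto
  rw [hset, Finset.card_sdiff_of_subset hsub, Finset.card_erase_of_mem (Finset.mem_univ y),
    RAdj_card_false hD0 hDs hhs hsm hsD hsD', Finset.card_univ, ZMod.card]

end radj

lemma residual_exists (m b a : ℕ) [NeZero m] (hm : 2 ≤ m) (hb1 : 1 ≤ b) (hbm : b ≤ m - 1)
    (ham : a ≤ m - 1) (hpar : Even (m * (b + 1) + a)) :
    ∃ (R : ZMod m → ZMod m → Bool) (S : Finset (ZMod m)),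
      (∀ x y, R x y = true → R y x = true) ∧ (∀ x y, R x y = true → x ≠ y) ∧ S.card = a ∧
      ∀ y : ZMod m, (Finset.univ.filter fun x => R x y = true).card
        = if y ∈ S then b else b - 1 := by
  rcases Nat.even_or_odd b with hbe | hbo
  · -- b even
    rw [Nat.even_iff] at hbe
    have ha2 : a % 2 = m % 2 := by
      have h1 : Even (m * (b + 1) + a) ↔ (Even (m * (b + 1)) ↔ Even a) := Nat.even_add
      have h2 := h1.mp hpar
      rcases Nat.even_or_odd m with hme | hmo
      · have h3 : Even (m * (b + 1)) := hme.mul_right _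
        have := h2.mp h3
        rw [Nat.even_iff] at this hme; omega
      · have h3 : ¬ Even (m * (b + 1)) := by
          rw [Nat.even_mul]
          push_neg
          refine ⟨Nat.not_even_iff_odd.mpr hmo, ?_⟩
          rw [Nat.even_iff]; omega
        have h4 : ¬ Even a := fun hc => h3 (h2.mpr hc)
        rw [Nat.even_iff] at h4
        rw [Nat.odd_iff] at hmo
        omega
    rcases Nat.even_or_odd m with hme | hmo
    · -- C3 : b even, m even : D = Dset ∪ diameter, direct
      rw [Nat.even_iff] at hme
      set k := b / 2 - 1 with hk
      have hk2 : 2 * k = b - 2 := by omega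
      set h := a / 2 with hh
      have hh2 : 2 * h = a := by omega
      set s := max h (k + 1) with hs
      have hb2 : b ≤ m - 2 := by omega
      have ha2' : a ≤ m - 2 := by omega
      have hhs : h ≤ s := le_max_left _ _
      have hsm : s + h ≤ m := by omega
      have hsk1 : k + 1 ≤ s := le_max_right _ _
      have hsk2 : s ≤ m - k - 1 := by omega
      have hslt : 2 * s ≤ m - 2 := by omega
      have hkm : 2 * k ≤ m - 1 := by omega
      set dd : ZMod m := ((m / 2 : ℕ) : ZMod m) with hdd
      have hddval : dd.val = m / 2 := ZMod.val_natCast_of_lt (by omega)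
      have hddD : dd ∉ Dset m k := (natCast_not_mem_Dset hkm (by omega) (by omega)).1
      set D : Finset (ZMod m) := insert dd (Dset m k) with hD
      have hcard : D.card = b - 1 := by
        rw [hD, Finset.card_insert_of_notMem hddD, card_Dset hkm]
        omega
      have hD0 : (0 : ZMod m) ∉ D := by
        rw [hD, Finset.mem_insert]
        push_neg
        refine ⟨?_, zero_not_mem_Dset hkm⟩
        intro hc
        rw [← hc, ZMod.val_zero] at hddval
        omega
      have hDs : ∀ z ∈ D, -z ∈ D := by
        intro z hz
        rw [hD, Finset.mem_insert] at hz ⊢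
        rcases hz with rfl | hz
        · left
          rw [hdd, neg_natCast_eq hkm (m/2) (by omega) (by omega)]
          congr 1
          omega
        · right; exact neg_mem_Dset hkm hz
      have hsD : (s : ZMod m) ∉ D ∧ -(s : ZMod m) ∉ D := by
        have hbase := natCast_not_mem_Dset hkm hsk1 hsk2
        have hsv : ((s : ZMod m)).val = s := ZMod.val_natCast_of_lt (by omega)
        have hsv' : (-(s : ZMod m)).val = m - s := by
          rw [neg_natCast_eq hkm s (by omega) (by omega), ZMod.val_natCast_of_lt (by omega)]
        constructor <;> rw [hD, Finset.mem_insert] <;> push_neg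
        · refine ⟨?_, hbase.1⟩
          intro hc
          rw [hc, hddval] at hsv
          omega
        · refine ⟨?_, hbase.2⟩
          intro hc
          rw [hc, hddval] at hsv'
          omega
      refine ⟨fun x y => decide (RAdj m D h s false x y),
        Finset.univ.filter (fun x => (pm m h s x).isSome), ?_, ?_, ?_, ?_⟩
      · intro x y hxy
        rw [decide_eq_true_eq] at hxy ⊢
        exact RAdj_symm hDs hhs hsm hxy
      · intro x y hxy
        rw [decide_eq_true_eq] at hxy
        exact hxy.1
      · rw [card_pm_matched hhs hsm]; omega
      · intro y
        rw [Finset.filter_congr (fun x _ => by rw [decide_eq_true_eq] : ∀ x ∈ Finset.univ,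
          (decide (RAdj m D h s false x y) = true) ↔ RAdj m D h s false x y)]
        rw [RAdj_card_false hD0 hDs hhs hsm hsD.1 hsD.2, hcard]
        simp only [Finset.mem_filter, Finset.mem_univ, true_and]
        rcases hsome : (pm m h s y).isSome with hf | ht
        · simp [hsome]
        · simp [hsome]
          omega
    · -- C2 : b even, m odd : complement mode
      rw [Nat.odd_iff] at hmo
      set k := (m - b - 1) / 2 with hk
      have hk2 : 2 * k = m - b - 1 := by omega
      have ha1 : 1 ≤ a := by omega
      set c := m - a with hc
      have hce : c % 2 = 0 := by omega
      set h := c / 2 with hh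
      have hh2 : 2 * h = c := by omega
      set s := max h (k + 1) with hs
      have hhs : h ≤ s := le_max_left _ _
      have hkm : 2 * k ≤ m - 1 := by omega
      have hsm : s + h ≤ m := by omega
      have hsk1 : k + 1 ≤ s := le_max_right _ _
      have hsk2 : s ≤ m - k - 1 := by omega
      have hsD := natCast_not_mem_Dset hkm hsk1 hsk2
      have hD0 := zero_not_mem_Dset (m := m) hkm
      have hDs : ∀ z ∈ Dset m k, -z ∈ Dset m k := fun z hz => neg_mem_Dset hkm hz
      have hcard : (Dset m k).card = m - b - 1 := by rw [card_Dset hkm]; omega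
      refine ⟨fun x y => decide (RAdj m (Dset m k) h s true x y),
        Finset.univ.filter (fun x => ¬ (pm m h s x).isSome), ?_, ?_, ?_, ?_⟩
      · intro x y hxy
        rw [decide_eq_true_eq] at hxy ⊢
        exact RAdj_symm hDs hhs hsm hxy
      · intro x y hxy
        rw [decide_eq_true_eq] at hxy
        exact hxy.1
      · have htot : (Finset.univ.filter (fun x : ZMod m => (pm m h s x).isSome)).card = 2 * h :=
          card_pm_matched hhs hsm
        have := Finset.card_filter_add_card_filter_not
          (s := (Finset.univ : Finset (ZMod m))) (p := fun x => (pm m h s x).isSome)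
        rw [Finset.card_univ, ZMod.card] at this
        omega
      · intro y
        rw [Finset.filter_congr (fun x _ => by rw [decide_eq_true_eq] : ∀ x ∈ Finset.univ,
          (decide (RAdj m (Dset m k) h s true x y) = true) ↔ RAdj m (Dset m k) h s true x y)]
        rw [RAdj_card_true hD0 hDs hhs hsm hsD.1 hsD.2, hcard]
        simp only [Finset.mem_filter, Finset.mem_univ, true_and]
        rcases hsome : (pm m h s y).isSome with hf | ht
        · simp [hsome]
          omega
        · simp [hsome]
          omega
  · -- C1 : b odd : direct, no diameter
    rw [Nat.odd_iff] at hbo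
    have hae : a % 2 = 0 := by
      have h1 : Even (m * (b + 1)) := by
        apply Even.mul_left
        rw [Nat.even_iff]; omega
      have := (Nat.even_add.mp hpar).mp h1
      rw [Nat.even_iff] at this; omega
    set k := (b - 1) / 2 with hk
    have hk2 : 2 * k = b - 1 := by omega
    set h := a / 2 with hh
    have hh2 : 2 * h = a := by omega
    set s := max h (k + 1) with hs
    have hhs : h ≤ s := le_max_left _ _
    have hkm : 2 * k ≤ m - 1 := by omega
    have hsm : s + h ≤ m := by omega
    have hsk1 : k + 1 ≤ s := le_max_right _ _
    have hsk2 : s ≤ m - k - 1 := by omega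
    have hsD := natCast_not_mem_Dset hkm hsk1 hsk2
    have hD0 := zero_not_mem_Dset (m := m) hkm
    have hDs : ∀ z ∈ Dset m k, -z ∈ Dset m k := fun z hz => neg_mem_Dset hkm hz
    have hcard : (Dset m k).card = b - 1 := by rw [card_Dset hkm]; omega
    refine ⟨fun x y => decide (RAdj m (Dset m k) h s false x y),
      Finset.univ.filter (fun x => (pm m h s x).isSome), ?_, ?_, ?_, ?_⟩
    · intro x y hxy
      rw [decide_eq_true_eq] at hxy ⊢
      exact RAdj_symm hDs hhs hsm hxy
    · intro x y hxy
      rw [decide_eq_true_eq] at hxy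
      exact hxy.1
    · rw [card_pm_matched hhs hsm]; omega
    · intro y
      rw [Finset.filter_congr (fun x _ => by rw [decide_eq_true_eq] : ∀ x ∈ Finset.univ,
        (decide (RAdj m (Dset m k) h s false x y) = true) ↔ RAdj m (Dset m k) h s false x y)]
      rw [RAdj_card_false hD0 hDs hhs hsm hsD.1 hsD.2, hcard]
      simp only [Finset.mem_filter, Finset.mem_univ, true_and]
      rcases hsome : (pm m h s y).isSome with hf | ht
      · simp [hsome]
      · simp [hsome]
        omega

section hub

variable (n : ℕ) (R : ZMod (n - 1) → ZMod (n - 1) → Bool)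

def resid (v : Fin n) : ZMod (n - 1) := ((v.val - 1 : ℕ) : ZMod (n - 1))

def hubG (hsym : ∀ x y, R x y = true → R y x = true) : SimpleGraph (Fin n) where
  Adj u v := u ≠ v ∧ (u.val = 0 ∨ v.val = 0 ∨ R (resid n u) (resid n v) = true)
  symm := by
    constructor
    rintro u v ⟨h1, h2⟩
    refine ⟨h1.symm, ?_⟩
    rcases h2 with h | h | h
    · right; left; exact h
    · left; exact h
    · right; right; exact hsym _ _ h
  loopless := ⟨fun v h => h.1 rfl⟩

variable (hsym : ∀ x y, R x y = true → R y x = true)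

instance : DecidableRel (hubG n R hsym).Adj := fun u v => by
  unfold hubG
  exact (inferInstance : Decidable (u ≠ v ∧ (u.val = 0 ∨ v.val = 0 ∨ R (resid n u) (resid n v) = true)))

lemma hub_degreeMultiset [NeZero (n - 1)] (hn : 2 ≤ n) (hne : ∀ x y, R x y = true → x ≠ y) :
    degreeMultiset (hubG n R hsym)
      = (n - 1) ::ₘ Multiset.map
          (fun x : ZMod (n - 1) => 1 + (Finset.univ.filter fun z => R z x = true).card)
          Finset.univ.val := by
  classical
  set hub : Fin n := ⟨0, by omega⟩ with hhub
  have hval : ∀ x : ZMod (n - 1), x.val < n - 1 := fun x => ZMod.val_lt x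
  set lift : ZMod (n - 1) → Fin n := fun x => ⟨x.val + 1, by have := hval x; omega⟩ with hlift
  have hresid_lift : ∀ x : ZMod (n - 1), resid n (lift x) = x := by
    intro x
    show (((x.val + 1 - 1 : ℕ)) : ZMod (n - 1)) = x
    rw [Nat.add_sub_cancel, ZMod.natCast_val, ZMod.cast_id]
  have hlift_inj : Function.Injective lift := by
    intro x y hxy
    have : x.val + 1 = y.val + 1 := congrArg Fin.val hxy
    exact ZMod.val_injective _ (by omega)
  have hlift_ne : ∀ x, lift x ≠ hub := by
    intro x hc
    have : x.val + 1 = 0 := congrArg Fin.val hc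
    omega
  -- univ split
  have hsplit : (Finset.univ : Finset (Fin n)).val = hub ::ₘ (Finset.univ.erase hub).val := by
    conv_lhs => rw [← Finset.insert_erase (Finset.mem_univ hub)]
    rw [Finset.insert_val_of_notMem (Finset.notMem_erase hub Finset.univ)]
  have herase : Finset.univ.erase hub = Finset.image lift Finset.univ := by
    ext u
    simp only [Finset.mem_erase, Finset.mem_univ, and_true, Finset.mem_image, true_and]
    constructor
    · intro hu
      have hu0 : u.val ≠ 0 := by
        intro hc
        apply hu
        apply Fin.ext
        simpa using hc
      refine ⟨((u.val - 1 : ℕ) : ZMod (n - 1)), ?_⟩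
      apply Fin.ext
      show (((u.val - 1 : ℕ) : ZMod (n - 1))).val + 1 = u.val
      rw [ZMod.val_natCast_of_lt (by have := u.isLt; omega)]
      omega
    · rintro ⟨x, -, rfl⟩
      exact hlift_ne x
  -- degree of hub
  have hdeghub : ((hubG n R hsym).neighborSet hub).ncard = n - 1 := by
    rw [ncard_neighborSet]
    have : Finset.univ.filter ((hubG n R hsym).Adj hub) = Finset.univ.erase hub := by
      ext u
      simp only [Finset.mem_filter, Finset.mem_univ, true_and, Finset.mem_erase, and_true]
      constructor
      · intro hu
        exact fun hc => hu.1 hc.symm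
      · intro hu
        exact ⟨fun hc => hu hc.symm, Or.inl rfl⟩
    rw [this, Finset.card_erase_of_mem (Finset.mem_univ hub), Finset.card_univ, Fintype.card_fin]
  -- degree of lift x
  have hdeglift : ∀ x : ZMod (n - 1),
      ((hubG n R hsym).neighborSet (lift x)).ncard
        = 1 + (Finset.univ.filter fun z => R z x = true).card := by
    intro x
    rw [ncard_neighborSet]
    have hset : Finset.univ.filter ((hubG n R hsym).Adj (lift x))
        = insert hub (Finset.image lift (Finset.univ.filter fun z => R x z = true)) := by
      ext u
      simp only [Finset.mem_filter, Finset.mem_univ, true_and, Finset.mem_insert,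
        Finset.mem_image]
      constructor
      · rintro ⟨hne', hcase⟩
        rcases hcase with h | h | h
        · exact absurd (Fin.ext (by simpa using h) : lift x = hub) (hlift_ne x)
        · left
          apply Fin.ext
          simpa using h
        · rcases eq_or_ne u hub with rfl | hu
          · left; rfl
          · right
            rw [hresid_lift x] at h
            have hu0 : u.val ≠ 0 := by
              intro hc
              exact hu (Fin.ext (by simpa using hc))
            refine ⟨resid n u, h, ?_⟩
            apply Fin.ext
            show (((u.val - 1 : ℕ) : ZMod (n - 1))).val + 1 = u.val
            rw [ZMod.val_natCast_of_lt (by have := u.isLt; omega)]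
            omega
      · rintro (rfl | ⟨z, hz, rfl⟩)
        · exact ⟨(hlift_ne x), Or.inr (Or.inl rfl)⟩
        · refine ⟨?_, Or.inr (Or.inr ?_)⟩
          · intro hc
            exact (hne x z hz) (hlift_inj hc)
          · rw [hresid_lift x, hresid_lift z]
            exact hz
    have hflip : (Finset.univ.filter fun z => R x z = true)
        = (Finset.univ.filter fun z => R z x = true) := by
      ext z
      simp only [Finset.mem_filter, Finset.mem_univ, true_and]
      exact ⟨fun h => hsym _ _ h, fun h => hsym _ _ h⟩
    rw [hset, Finset.card_insert_of_notMem, Finset.card_image_of_injective _ hlift_inj, hflip]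
    · omega
    · intro hc
      simp only [Finset.mem_image] at hc
      obtain ⟨z, -, hz⟩ := hc
      exact hlift_ne z hz
  -- assemble
  unfold degreeMultiset
  rw [hsplit, Multiset.map_cons, hdeghub, herase,
    Finset.image_val_of_injOn (hlift_inj.injOn), Multiset.map_map]
  congr 1
  apply Multiset.map_congr rfl
  intro x _
  exact hdeglift x

end hub

end Aux

lemma graphical_main (n b a : ℕ) (hn : 2 ≤ n) (hb1 : 1 ≤ b) (hbm : b ≤ n - 1)
    (ham : a < n - 1) (hpar : Even ((n - 1) * (b + 1) + a)) (hextra : b = n - 1 → a = 0) :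
    ∃ G : SimpleGraph (Fin n), degreeMultiset G
      = (n - 1) ::ₘ (Multiset.replicate a (b + 1) + Multiset.replicate (n - 1 - a) b) := by
  classical
  rcases eq_or_lt_of_le hbm with hbeq | hblt
  · -- complete graph
    obtain rfl : a = 0 := hextra hbeq
    subst hbeq
    refine ⟨⊤, ?_⟩
    have hdeg : ∀ v : Fin n, ((⊤ : SimpleGraph (Fin n)).neighborSet v).ncard = n - 1 := by
      intro v
      rw [ncard_neighborSet]
      have : Finset.univ.filter ((⊤ : SimpleGraph (Fin n)).Adj v) = Finset.univ.erase v := by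
        ext u
        simp only [Finset.mem_filter, Finset.mem_univ, true_and, Finset.mem_erase, and_true,
          SimpleGraph.top_adj]
        exact ⟨fun h => fun hc => h hc.symm, fun h => fun hc => h hc.symm⟩
      rw [this, Finset.card_erase_of_mem (Finset.mem_univ v), Finset.card_univ, Fintype.card_fin]
    have h1 : degreeMultiset (⊤ : SimpleGraph (Fin n)) = Multiset.replicate n (n - 1) := by
      unfold degreeMultiset
      rw [Multiset.eq_replicate]
      constructor
      · simp
      · intro x hx
        rw [Multiset.mem_map] at hx
        obtain ⟨v, -, rfl⟩ := hx
        exact hdeg v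
      
    rw [h1]
    have h2 : Multiset.replicate 0 (n - 1 + 1) + Multiset.replicate (n - 1 - 0) (n - 1)
        = Multiset.replicate (n - 1) (n - 1) := by
      simp
    rw [h2, ← Multiset.replicate_succ]
    congr 1
    omega
  · -- hub + residual
    have hm2 : 2 ≤ n - 1 := by omega
    haveI : NeZero (n - 1) := ⟨by omega⟩
    obtain ⟨R, S, hsym, hne, hScard, hdeg⟩ :=
      residual_exists (n - 1) b a hm2 hb1 (by omega) (by omega) hpar
    refine ⟨hubG n R (fun x y h => hsym x y h), ?_⟩
    rw [hub_degreeMultiset n R (fun x y h => hsym x y h) hn hne]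
    congr 1
    have hmap : Multiset.map
        (fun x : ZMod (n - 1) => 1 + (Finset.univ.filter fun z => R z x = true).card)
        Finset.univ.val
        = Multiset.map (fun x : ZMod (n - 1) => if x ∈ S then b + 1 else b)
            Finset.univ.val := by
      apply Multiset.map_congr rfl
      intro x _
      rw [hdeg x]
      split_ifs with hx
      · omega
      · omega
    rw [hmap, map_univ_indicator S (b + 1) b, hScard, ZMod.card]

theorem stmt11 (N n : ℕ) (hn : 2 ≤ n) (hN : Even N)
    (h1 : 2 * n - 2 ≤ N) (h2 : N ≤ n * (n - 1))
    (b a : ℕ) (hb : b = (N - n + 1) / (n - 1)) (ha : a = N - (n - 1) * (b + 1))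
    (m : Multiset ℕ)
    (hm : m = (n - 1) ::ₘ (Multiset.replicate a (b + 1) + Multiset.replicate (n - 1 - a) b)) :
    0 < b ∧ b ≤ n - 1 ∧ a < n - 1 ∧
    Multiset.card m = n ∧ Multiset.sum m = N ∧ 0 ∉ m ∧
    IsGraphicalM m ∧ ForciblyConnectedM m := by
  obtain ⟨k, rfl⟩ : ∃ k, n = k + 2 := ⟨n - 2, by omega⟩
  have hm1 : k + 2 - 1 = k + 1 := by omega
  have hNn : k + 2 ≤ N := by omega
  have hsub : N - (k + 2) + 1 = N - (k + 1) := by omega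
  -- division facts
  have hdm := Nat.div_add_mod (N - (k + 1)) (k + 1)
  set q := (N - (k + 1)) / (k + 1) with hq
  set r := (N - (k + 1)) % (k + 1) with hr
  have hrlt : r < k + 1 := Nat.mod_lt _ (by omega)
  have hbq : b = q := by rw [hb, hm1, hsub]
  subst hbq
  -- N ≤ (k+2)(k+1) = (k+1)*(k+1) + (k+1)
  have hN2 : N ≤ (k + 1) * (k + 1) + (k + 1) := by
    have : (k + 2) * (k + 2 - 1) = (k + 1) * (k + 1) + (k + 1) := by
      rw [hm1]; ring
    omega
  have hq_pos : 0 < q := by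
    rcases Nat.eq_zero_or_pos q with h0 | h
    · rw [h0, Nat.mul_zero] at hdm
      omega
    · exact h
  have hq_le : q ≤ k + 1 := by
    rw [hq]
    calc (N - (k + 1)) / (k + 1) ≤ ((k + 1) * (k + 1)) / (k + 1) :=
          Nat.div_le_div_right (by omega)
      _ = k + 1 := Nat.mul_div_cancel_left _ (by omega)
  have har : a = r := by
    rw [ha, hm1]
    have e1 : (k + 1) * (q + 1) = (k + 1) * q + (k + 1) := by ring
    omega
  subst har
  have hN3 : N = (k + 1) * q + r + (k + 1) := by omega
  have hrange : r < k + 1 := hrlt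
  have hextra : q = k + 2 - 1 → r = 0 := by
    intro hqe
    rw [hm1] at hqe
    rw [hqe] at hdm
    omega
  have hcardm : Multiset.card m = k + 2 := by
    rw [hm]
    simp only [Multiset.card_cons, Multiset.card_add, Multiset.card_replicate]
    omega
  refine ⟨hq_pos, by omega, by omega, hcardm, ?_, ?_, ?_, ?_⟩
  · -- sum
    rw [hm]
    simp only [Multiset.sum_cons, Multiset.sum_add, Multiset.sum_replicate, smul_eq_mul, hm1]
    have hc : k + 1 - r = (k + 1) - r := rfl
    have e2 : r * (q + 1) + (k + 1 - r) * q = r + (r + (k + 1 - r)) * q := by ring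
    have e3 : r + (k + 1 - r) = k + 1 := by omega
    rw [e3] at e2
    omega
  · -- 0 ∉ m
    rw [hm]
    simp only [Multiset.mem_cons, Multiset.mem_add, Multiset.mem_replicate]
    push_neg
    refine ⟨by omega, ?_, ?_⟩ <;> intro h <;> omega
  · -- graphical
    unfold IsGraphicalM
    rw [hcardm, hm]
    have hpar : Even ((k + 2 - 1) * (q + 1) + r) := by
      have : (k + 2 - 1) * (q + 1) + r = N := by
        rw [hm1]
        have e1 : (k + 1) * (q + 1) = (k + 1) * q + (k + 1) := by ring
        omega
      rw [this]
      exact hN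
    exact graphical_main (k + 2) q r hn hq_pos (by omega) (by omega) hpar hextra
  · exact forcibly_of_mem_s11 (k + 2) hn m hcardm (by rw [hm]; simp)
end
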